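/- arXiv:2007.09719 — 4 statements merged into one kernel-verified Lean document; each statement's English description precedes it below -/
import Mathlib

section
/- Let T be a spanning tree of a graph with edges e₁, …, e_k distinguished, and let O₁, …, O_k be cycles such that for each i, j ∈ [k]: eᵢ ∈ O_j if and only if i = j or i ≡ j−1 (mod k). Then the symmetric difference O = O₁ △ ⋯ △ O_k is nonempty and contains none of e₁, …, e_k; moreover, since O is Eulerian (every vertex has even degree in O), O contains a cycle. -/
/-- The set of vertices incident to an edge set. -/
def edgeVerts {V : Type*} (S : Set (Sym2 V)) : Set V := {v | ∃ e ∈ S, v ∈ e}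

/-- The union of a multiset family of edge sets. -/
def famUnion {α : Type*} (F : Multiset (Finset α)) : Set α := {e | ∃ S ∈ F, e ∈ S}

/-- `C` is the edge set of a cycle (of length ≥ 3) in the complete graph on `V`. -/
def IsCycleEdgeSet {V : Type*} [DecidableEq V] (C : Finset (Sym2 V)) : Prop :=
  ∃ (v : V) (w : (⊤ : SimpleGraph V).Walk v v), w.IsCycle ∧ w.edges.toFinset = C

/-- `C` is the edge set of an odd cycle. -/
def IsOddCycleEdgeSet {V : Type*} [DecidableEq V] (C : Finset (Sym2 V)) : Prop :=
  IsCycleEdgeSet C ∧ Odd C.card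

/-- `R` is a rainbow set for the indexed family `F`. -/
def IsRainbow {α ι : Type*} (F : ι → Finset α) (R : Finset α) : Prop :=
  ∃ σ : α → ι, Set.InjOn σ ↑R ∧ ∀ e ∈ R, e ∈ F (σ e)

/-- `R` is a rainbow set for the multiset family `F`:
each element of `R` is assigned a member of `F` containing it, members being
used with multiplicity at most their multiplicity in `F`. -/
def IsRainbowM {α : Type*} (F : Multiset (Finset α)) (R : Finset α) : Prop :=
  ∃ f : α → Finset α, Multiset.map f R.val ≤ F ∧ ∀ e ∈ R, e ∈ f e

/-- A family of cycles is a pruned cactus. -/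
inductive IsPrunedCactus {V : Type*} [DecidableEq V] : Multiset (Finset (Sym2 V)) → Prop
  | base (O : Multiset (Finset (Sym2 V))) (C : Finset (Sym2 V)) :
      IsCycleEdgeSet C → C.card = Multiset.card O + 1 →
      (∀ D ∈ O, D = C) → IsPrunedCactus O
  | glue (O₁ O₂ : Multiset (Finset (Sym2 V))) :
      IsPrunedCactus O₁ → IsPrunedCactus O₂ →
      (∃ v, edgeVerts (famUnion O₁) ∩ edgeVerts (famUnion O₂) = {v}) →
      IsPrunedCactus (O₁ + O₂)

lemma edge_head_unique {V : Type*} {G : SimpleGraph V} {v b u : V} (h : G.Adj v b)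
    (p : G.Walk b u) (hp : (SimpleGraph.Walk.cons h p).IsPath)
    {e : Sym2 V} (he : e ∈ (SimpleGraph.Walk.cons h p).edges) (hv : v ∈ e) :
    e = s(v, b) := by
  rw [SimpleGraph.Walk.edges_cons, List.mem_cons] at he
  rcases he with rfl | he
  · rfl
  · exfalso
    obtain ⟨y, rfl⟩ := Sym2.mem_iff_exists.mp hv
    exact ((SimpleGraph.Walk.cons_isPath_iff _ _).mp hp).2 (p.fst_mem_support_of_mem_edges he)

lemma exists_cycle_of_even_degrees {V : Type*} [Fintype V] [DecidableEq V]
    (S : Finset (Sym2 V)) (hd : ∀ s ∈ S, ¬ s.IsDiag)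
    (hdeg : ∀ v : V, Even ((S.filter (fun s => v ∈ s)).card))
    (hne : S.Nonempty) : ∃ C ⊆ S, IsCycleEdgeSet C := by
  classical
  set G := SimpleGraph.fromEdgeSet (↑S : Set (Sym2 V)) with hG
  have hadj : ∀ a b : V, G.Adj a b ↔ s(a,b) ∈ S ∧ a ≠ b := by
    intro a b; rw [hG, SimpleGraph.fromEdgeSet_adj]; simp
  have hcyc : ¬ G.IsAcyclic := by
    intro hac
    have step : ∀ (v u : V) (p : G.Walk v u), p.IsPath → 0 < p.length →
        ∃ w, ∃ q : G.Walk w u, q.IsPath ∧ q.length = p.length + 1 := by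
      intro v u p hp hl
      cases p with
      | nil => simp at hl
      | @cons _ b _ h p' =>
        have hvb : s(v, b) ∈ S := ((hadj v b).mp h).1
        have h1 : s(v,b) ∈ S.filter (fun s => v ∈ s) := by
          simp [Finset.mem_filter, hvb]
        have h2 : 1 < (S.filter (fun s => v ∈ s)).card := by
          rcases hdeg v with ⟨m, hm⟩
          have : 0 < (S.filter (fun s => v ∈ s)).card := Finset.card_pos.mpr ⟨_, h1⟩
          omega
        obtain ⟨e, heS, hne'⟩ := Finset.exists_mem_ne h2 s(v,b)
        rw [Finset.mem_filter] at heS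
        obtain ⟨y, rfl⟩ := Sym2.mem_iff_exists.mp heS.2
        have hvy : v ≠ y := fun hh => hd _ heS.1 (Sym2.mk_isDiag_iff.mpr hh)
        have hadjvy : G.Adj v y := (hadj v y).mpr ⟨heS.1, hvy⟩
        by_cases hys : y ∈ (SimpleGraph.Walk.cons h p').support
        · exfalso
          have hqp : ((SimpleGraph.Walk.cons h p').takeUntil y hys).IsPath :=
            hp.takeUntil hys
          have hcyc2 : (SimpleGraph.Walk.cons hadjvy.symm
              ((SimpleGraph.Walk.cons h p').takeUntil y hys)).IsCycle := by
            rw [SimpleGraph.Walk.cons_isCycle_iff]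
            refine ⟨hqp, fun hmem => ?_⟩
            have hmem' := SimpleGraph.Walk.edges_takeUntil_subset _ hys hmem
            have heq := edge_head_unique h p' hp hmem' (by simp)
            apply hne'
            rw [Sym2.eq_swap]; exact heq
          exact hac _ hcyc2
        · exact ⟨y, SimpleGraph.Walk.cons hadjvy.symm (SimpleGraph.Walk.cons h p'),
            (SimpleGraph.Walk.cons_isPath_iff _ _).mpr ⟨hp, hys⟩, by simp⟩
    obtain ⟨s, hs⟩ := hne
    have hstart : ∃ (v u : V), ∃ p : G.Walk v u, p.IsPath ∧ p.length = 1 := by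
      induction s using Sym2.ind with
      | _ a b =>
        have hab : a ≠ b := fun hh => hd _ hs (Sym2.mk_isDiag_iff.mpr hh)
        have hadj' : G.Adj a b := (hadj a b).mpr ⟨hs, hab⟩
        exact ⟨a, b, SimpleGraph.Walk.cons hadj' SimpleGraph.Walk.nil,
          by simp [SimpleGraph.Walk.cons_isPath_iff, hab], by simp⟩
    have hall : ∀ n : ℕ, ∃ (v u : V), ∃ p : G.Walk v u, p.IsPath ∧ p.length = n + 1 := by
      intro n
      induction n with
      | zero => exact hstart
      | succ m ih =>
        obtain ⟨v, u, p, hp, hl⟩ := ih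
        obtain ⟨w, q, hq, hql⟩ := step v u p hp (by omega)
        exact ⟨w, u, q, hq, by omega⟩
    obtain ⟨v, u, p, hp, hl⟩ := hall (Fintype.card V)
    have := hp.length_lt
    omega
  simp only [SimpleGraph.IsAcyclic] at hcyc
  push_neg at hcyc
  obtain ⟨v, c, hc⟩ := hcyc
  have hedges : ∀ x ∈ c.edges, x ∈ S := by
    intro x hx
    have := c.edges_subset_edgeSet hx
    rw [hG, SimpleGraph.edgeSet_fromEdgeSet] at this
    exact this.1
  have htop : ∀ x ∈ c.edges, x ∈ (⊤ : SimpleGraph V).edgeSet := by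
    intro x hx
    rw [SimpleGraph.edgeSet_top]
    have := c.edges_subset_edgeSet hx
    rw [hG, SimpleGraph.edgeSet_fromEdgeSet] at this
    exact this.2
  refine ⟨(c.transfer ⊤ htop).edges.toFinset, ?_, v, c.transfer ⊤ htop, hc.transfer htop, rfl⟩
  intro x hx
  rw [List.mem_toFinset, SimpleGraph.Walk.edges_transfer] at hx
  exact hedges x hx

lemma cycle_even_degree {V : Type*} [DecidableEq V] {C : Finset (Sym2 V)}
    (hC : IsCycleEdgeSet C) (v : V) : Even ((C.filter (fun s => v ∈ s)).card) := by
  obtain ⟨u, w, hw, rfl⟩ := hC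
  have hnd : w.edges.Nodup := hw.edges_nodup
  have hset : w.edges.toFinset.filter (fun s => v ∈ s)
      = (w.edges.filter (fun e => v ∈ e)).toFinset := by
    ext x; simp
  have hcard : (w.edges.toFinset.filter (fun s => v ∈ s)).card
      = w.edges.countP (fun e => v ∈ e) := by
    rw [hset, List.toFinset_card_of_nodup (hnd.filter _), List.countP_eq_length_filter]
  rw [hcard]
  exact (hw.isTrail.even_countP_edges_iff v).mpr (fun h => absurd rfl h)

lemma natCast_zmod_two (m : ℕ) : ((m : ZMod 2)) = if Odd m then 1 else 0 := by
  induction m with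
  | zero => simp
  | succ t ih =>
    rw [Nat.cast_succ, ih]
    rcases Nat.even_or_odd t with h | h
    · simp [Nat.not_odd_iff_even.mpr h, Nat.odd_add_one, Nat.not_odd_iff_even]
    · simp [h, Nat.odd_add_one, Nat.not_even_iff_odd.mpr h]
      decide

/-- Let `T` be a spanning tree, `e i ∈ T` distinct distinguished edges, and `O i` the
fundamental cycle of an edge `f i ∉ T`, such that `e i ∈ O j` iff `i = j` or
`i ≡ j - 1 (mod k)`. Then the symmetric difference of the `O i` is nonempty, contains
no `e i`, and contains a cycle. -/
theorem symmDiff_of_fundamental_cycles {N k : ℕ} (hk : 2 ≤ k)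
    (T : Finset (Sym2 (Fin N)))
    (hTacyc : (SimpleGraph.fromEdgeSet (↑T : Set (Sym2 (Fin N)))).IsAcyclic)
    (hTconn : (SimpleGraph.fromEdgeSet (↑T : Set (Sym2 (Fin N)))).Connected)
    (e : Fin k → Sym2 (Fin N)) (he : ∀ i, e i ∈ T) (heinj : Function.Injective e)
    (f : Fin k → Sym2 (Fin N)) (hfinj : Function.Injective f) (hfT : ∀ i, f i ∉ T)
    (O : Fin k → Finset (Sym2 (Fin N)))
    (hOc : ∀ i, IsCycleEdgeSet (O i))
    (hOsub : ∀ i, (↑(O i) : Set (Sym2 (Fin N))) ⊆ insert (f i) (↑T : Set (Sym2 (Fin N))))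
    (hfO : ∀ i, f i ∈ O i)
    (hpat : ∀ i j, e i ∈ O j ↔ (i = j ∨ (i.val + 1) % k = j.val)) :
    -- `SD` is the symmetric difference `O 0 ∆ ⋯ ∆ O (k-1)`: the edges lying in an odd
    -- number of the cycles `O i`.
    let SD := (Finset.univ.biUnion O).filter
      (fun x => Odd ((Finset.univ.filter (fun j : Fin k => x ∈ O j)).card))
    SD.Nonempty ∧ (∀ i, e i ∉ SD) ∧ ∃ C ⊆ SD, IsCycleEdgeSet C := by
  intro SD
  classical
  have hSD : SD = (Finset.univ.biUnion O).filter
      (fun x => Odd ((Finset.univ.filter (fun j : Fin k => x ∈ O j)).card)) := rfl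
  have k0 : 0 < k := by omega
  have hfmem : ∀ i j : Fin k, f i ∈ O j ↔ i = j := by
    intro i j
    constructor
    · intro hmem
      rcases Set.mem_insert_iff.mp (hOsub j hmem) with heq | hT'
      · exact hfinj heq
      · exact absurd hT' (fun hh => hfT i (by exact_mod_cast hh))
    · rintro rfl; exact hfO i
  -- Part 1: nonempty
  have hone : (Finset.univ.filter (fun j : Fin k => f ⟨0,k0⟩ ∈ O j)).card = 1 := by
    have hset : Finset.univ.filter (fun j : Fin k => f ⟨0,k0⟩ ∈ O j) = {(⟨0,k0⟩ : Fin k)} := by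
      ext j
      simp [hfmem, eq_comm]
    rw [hset, Finset.card_singleton]
  have hne : SD.Nonempty := by
    refine ⟨f ⟨0,k0⟩, ?_⟩
    rw [hSD, Finset.mem_filter]
    exact ⟨Finset.mem_biUnion.mpr ⟨⟨0,k0⟩, Finset.mem_univ _, hfO _⟩,
      by rw [hone]; exact odd_one⟩
  -- Part 2: no e i
  have hnotin : ∀ i, e i ∉ SD := by
    intro i hmem
    have hj0lt : (i.val + 1) % k < k := Nat.mod_lt _ k0
    set j0 : Fin k := ⟨(i.val+1)%k, hj0lt⟩ with hj0
    have hij0 : i ≠ j0 := by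
      have hi := i.isLt
      intro hh
      have hval : i.val = (i.val+1)%k := congrArg Fin.val hh
      rcases Nat.lt_or_ge (i.val+1) k with h|h
      · rw [Nat.mod_eq_of_lt h] at hval; omega
      · have hk' : i.val+1 = k := by omega
        rw [hk', Nat.mod_self] at hval; omega
    have hfilter : Finset.univ.filter (fun j : Fin k => e i ∈ O j) = {i, j0} := by
      ext j
      simp only [Finset.mem_filter, Finset.mem_univ, true_and, hpat i j,
        Finset.mem_insert, Finset.mem_singleton]
      constructor
      · rintro (rfl|h)
        · left; rfl
        · right; exact Fin.ext h.symm
      · rintro (rfl|rfl)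
        · left; rfl
        · right; rfl
    rw [hSD, Finset.mem_filter, hfilter,
      Finset.card_insert_of_notMem (by simpa using hij0), Finset.card_singleton] at hmem
    exact absurd hmem.2 (by decide)
  -- Part 3: cycle
  have hdiag : ∀ s ∈ SD, ¬ s.IsDiag := by
    intro s hs
    rw [hSD, Finset.mem_filter] at hs
    obtain ⟨i, _, hi⟩ := Finset.mem_biUnion.mp hs.1
    obtain ⟨u, w, hw, hEq⟩ := hOc i
    rw [← hEq, List.mem_toFinset] at hi
    exact SimpleGraph.not_isDiag_of_mem_edgeSet _ (w.edges_subset_edgeSet hi)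
  have hdeg : ∀ v : Fin N, Even ((SD.filter (fun s => v ∈ s)).card) := by
    intro v
    set E := (Finset.univ.biUnion O).filter (fun s => v ∈ s) with hE
    have hsplit : SD.filter (fun s => v ∈ s)
        = E.filter (fun x => Odd ((Finset.univ.filter (fun j : Fin k => x ∈ O j)).card)) := by
      rw [hSD, hE]
      ext x
      simp only [Finset.mem_filter]
      tauto
    have hcast : (((SD.filter (fun s => v ∈ s)).card : ZMod 2)) = 0 := by
      rw [hsplit, Finset.card_filter]
      push_cast
      calc (∑ x ∈ E, if Odd ((Finset.univ.filter (fun j : Fin k => x ∈ O j)).card)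
              then (1 : ZMod 2) else 0)
          = ∑ x ∈ E, (((Finset.univ.filter (fun j : Fin k => x ∈ O j)).card : ZMod 2)) := by
            refine Finset.sum_congr rfl fun x _ => ?_
            rw [natCast_zmod_two]
        _ = ∑ x ∈ E, ∑ j : Fin k, (if x ∈ O j then (1:ZMod 2) else 0) := by
            refine Finset.sum_congr rfl fun x _ => ?_
            rw [Finset.card_filter]
            push_cast
            rfl
        _ = ∑ j : Fin k, ∑ x ∈ E, (if x ∈ O j then (1:ZMod 2) else 0) := Finset.sum_comm
        _ = ∑ j : Fin k, (((O j).filter (fun s => v ∈ s)).card : ZMod 2) := by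
            refine Finset.sum_congr rfl fun j _ => ?_
            rw [Finset.sum_boole]
            congr 2
            rw [hE]
            ext x
            simp only [Finset.mem_filter, Finset.mem_biUnion, Finset.mem_univ, true_and]
            constructor
            · rintro ⟨⟨_, hvx⟩, hxj⟩; exact ⟨hxj, hvx⟩
            · rintro ⟨hxj, hvx⟩; exact ⟨⟨⟨j, hxj⟩, hvx⟩, hxj⟩
        _ = 0 := by
            refine Finset.sum_eq_zero fun j _ => ?_
            rw [natCast_zmod_two, if_neg (Nat.not_odd_iff_even.mpr (cycle_even_degree (hOc j) v))]
    rw [natCast_zmod_two] at hcast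
    by_contra hodd
    rw [Nat.not_even_iff_odd] at hodd
    rw [if_pos hodd] at hcast
    exact one_ne_zero hcast
  obtain ⟨C, hCsub, hC⟩ := exists_cycle_of_even_degrees SD hdiag hdeg hne
  exact ⟨hne, hnotin, C, hCsub, hC⟩
end

section
/- For an edge set O with vertices contained in [n], O contains an odd cycle if and only if e₀ lies in the F₂-linear span of { e₀ + eᵢ + e_j : {i,j} ∈ O }, where e₀, e₁, …, e_n is the standard basis of F₂^{n+1}. -/
open Finset SimpleGraph

set_option linter.unusedSectionVars false

namespace OddCycleAux


variable {n : ℕ} {V : Type*} [DecidableEq V]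

/-- degree of a vertex in an edge finset -/
def degS (S : Finset (Sym2 V)) (v : V) : ℕ := (S.filter (fun e => v ∈ e)).card

/-- vector associated to an edge -/
def vec (e : Sym2 (Fin n)) : Fin (n + 1) → ZMod 2 :=
  Sym2.lift ⟨fun i j => Pi.single 0 1 + Pi.single i.succ 1 + Pi.single j.succ 1,
    fun i j => by dsimp only; rw [add_right_comm]⟩ e

lemma vec_mk (i j : Fin n) :
    vec s(i, j) = Pi.single 0 1 + Pi.single i.succ 1 + Pi.single j.succ 1 := rfl

lemma vec_apply_zero (e : Sym2 (Fin n)) : vec e 0 = 1 := by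
  induction e using Sym2.ind with
  | _ i j =>
    simp [vec_mk, Pi.single_apply, (Fin.succ_ne_zero i).symm, (Fin.succ_ne_zero j).symm]

lemma vec_apply_succ {e : Sym2 (Fin n)} (hd : ¬ e.IsDiag) (v : Fin n) :
    vec e v.succ = if v ∈ e then 1 else 0 := by
  induction e using Sym2.ind with
  | _ i j =>
    rw [Sym2.mk_isDiag_iff] at hd
    rcases eq_or_ne v i with rfl | hvi <;> rcases eq_or_ne v j with rfl | hvj <;>
      simp_all [vec_mk, Pi.single_apply, Fin.succ_inj, Sym2.mem_iff, Fin.succ_ne_zero]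

lemma vec_inj {e₁ e₂ : Sym2 (Fin n)} (h₁ : ¬ e₁.IsDiag) (h₂ : ¬ e₂.IsDiag)
    (h : vec e₁ = vec e₂) : e₁ = e₂ := by
  have hmem : ∀ v : Fin n, v ∈ e₁ ↔ v ∈ e₂ := by
    intro v
    have := congrFun h v.succ
    rw [vec_apply_succ h₁, vec_apply_succ h₂] at this
    by_cases hv1 : v ∈ e₁ <;> by_cases hv2 : v ∈ e₂ <;> simp_all
  induction e₁ using Sym2.ind with
  | _ i j =>
    induction e₂ using Sym2.ind with
    | _ k l =>
      rw [Sym2.mk_isDiag_iff] at h₁ h₂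
      have hi := (hmem i).mp (by simp)
      have hj := (hmem j).mp (by simp)
      have hk := (hmem k).mpr (by simp)
      have hl := (hmem l).mpr (by simp)
      rw [Sym2.mem_iff] at hi hj hk hl
      rw [Sym2.eq_iff]
      tauto

lemma sum_vec_zero (S : Finset (Sym2 (Fin n))) :
    (∑ e ∈ S, vec e) 0 = (S.card : ZMod 2) := by
  rw [Finset.sum_apply]
  rw [Finset.sum_congr rfl (fun e _ => vec_apply_zero e)]
  simp

lemma sum_vec_succ (S : Finset (Sym2 (Fin n))) (hd : ∀ e ∈ S, ¬ e.IsDiag) (v : Fin n) :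
    (∑ e ∈ S, vec e) v.succ = ((degS S v : ℕ) : ZMod 2) := by
  rw [Finset.sum_apply]
  rw [Finset.sum_congr rfl (fun e he => vec_apply_succ (hd e he) v)]
  rw [Finset.sum_boole]
  rfl

/-- parity of the number of edges of a walk containing a vertex -/
lemma walk_countP {G : SimpleGraph V} (x : V) :
    ∀ {a b : V} (w : G.Walk a b),
      (w.edges.countP (fun e => decide (x ∈ e)) + (if x = a then 1 else 0)
        + (if x = b then 1 else 0)) % 2 = 0 := by
  intro a b w
  induction w with
  | nil =>
    simp only [Walk.edges_nil, List.countP_nil]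
    split_ifs <;> omega
  | @cons a c b h p ih =>
    have hac : a ≠ c := h.ne
    rw [Walk.edges_cons, List.countP_cons]
    rcases eq_or_ne x a with rfl | hxa <;> rcases eq_or_ne x c with rfl | hxc <;>
      rcases eq_or_ne x b with rfl | hxb <;>
      simp_all [Sym2.mem_iff] <;> omega

lemma cycle_even_degS {C : Finset (Sym2 V)} (h : IsCycleEdgeSet C) (v : V) :
    Even (degS C v) := by
  obtain ⟨a, w, hw, rfl⟩ := h
  have hnd : w.edges.Nodup := hw.isTrail.edges_nodup
  have key := walk_countP (G := (⊤ : SimpleGraph V)) v w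
  have hdeg : degS w.edges.toFinset v = w.edges.countP (fun e => decide (v ∈ e)) := by
    have h1 : (w.edges.filter (fun e => decide (v ∈ e))).toFinset
        = w.edges.toFinset.filter (fun e => v ∈ e) := by
      ext e; simp [List.mem_filter]
    rw [degS, ← h1, List.toFinset_card_of_nodup (hnd.filter _),
      ← List.countP_eq_length_filter]
  rw [Nat.even_iff, hdeg]
  rcases eq_or_ne v a with rfl | hva <;> simp_all <;> omega

lemma cycle_card_pos {C : Finset (Sym2 V)} (h : IsCycleEdgeSet C) : 0 < C.card := by
  obtain ⟨a, w, hw, rfl⟩ := h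
  have hnd : w.edges.Nodup := hw.isTrail.edges_nodup
  rw [List.toFinset_card_of_nodup hnd, w.length_edges]
  have := hw.three_le_length
  omega



lemma edges_mapLe {G G' : SimpleGraph V} (h : G ≤ G') {u v : V} (p : G.Walk u v) :
    (p.mapLe h).edges = p.edges := by
  induction p with
  | nil => rfl
  | cons hadj p ih => simp [Walk.mapLe, ih]

variable [Fintype V]

lemma degree_fromEdgeSet (S : Finset (Sym2 V)) (hnd : ∀ e ∈ S, ¬ e.IsDiag) (v : V)
    [DecidableRel (fromEdgeSet (↑S : Set (Sym2 V))).Adj]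
    [Fintype ((fromEdgeSet (↑S : Set (Sym2 V))).neighborSet v)] :
    (fromEdgeSet (↑S : Set (Sym2 V))).degree v = degS S v := by
  classical
  rw [degree, degS]
  apply Finset.card_bij (fun u _ => s(v, u))
  · intro u hu
    rw [mem_neighborFinset, fromEdgeSet_adj] at hu
    simp only [mem_filter, Sym2.mem_iff]
    exact ⟨hu.1, Or.inl trivial⟩
  · intro u1 h1 u2 h2 h
    exact Sym2.congr_right.mp h
  · intro e he
    rw [mem_filter] at he
    refine ⟨Sym2.Mem.other he.2, ?_, Sym2.other_spec he.2⟩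
    rw [mem_neighborFinset, fromEdgeSet_adj]
    rw [Sym2.other_spec he.2]
    exact ⟨he.1, (Sym2.other_ne (hnd e he.1) he.2).symm⟩

lemma exists_cycle_sub (S : Finset (Sym2 V)) (hnd : ∀ e ∈ S, ¬ e.IsDiag)
    (hev : ∀ v, Even (degS S v)) (hne : S.Nonempty) :
    ∃ C ⊆ S, IsCycleEdgeSet C := by
  classical
  obtain ⟨e0, he0⟩ := hne
  induction e0 using Sym2.ind with
  | _ a b =>
  have hab : a ≠ b := by
    have := hnd _ he0; rwa [Sym2.mk_isDiag_iff] at this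
  set G : SimpleGraph V := fromEdgeSet (↑S) with hGdef
  have hb_adj : G.Adj a b := by rw [hGdef, fromEdgeSet_adj]; exact ⟨by exact_mod_cast he0, hab⟩
  set G' : SimpleGraph V := G.deleteEdges {s(a, b)} with hG'def
  have hG'adj : ∀ x y, G'.Adj x y ↔ G.Adj x y ∧ s(x, y) ≠ s(a, b) := by
    intro x y; rw [hG'def, deleteEdges_adj]; simp
  have hdeg : ∀ v, G.degree v = degS S v := fun v => degree_fromEdgeSet S hnd v
  -- degree relations between G' and G
  have hnb' : G'.neighborFinset a = G.neighborFinset a \ {b} := by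
    ext u
    simp only [mem_neighborFinset, hG'adj, mem_sdiff, mem_singleton]
    constructor
    · rintro ⟨h1, h2⟩; exact ⟨h1, fun h => h2 (by rw [h])⟩
    · rintro ⟨h1, h2⟩; exact ⟨h1, fun h => h2 (Sym2.congr_right.mp h)⟩
  have hdeg'a : G'.degree a = G.degree a - 1 := by
    rw [degree, degree, hnb', card_sdiff_of_subset (by simpa using hb_adj)]
    simp
  have hdeg'other : ∀ v, v ≠ a → v ≠ b → G'.degree v = G.degree v := by
    intro v hva hvb
    rw [degree, degree]
    congr 1
    ext u
    simp only [mem_neighborFinset, hG'adj]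
    refine ⟨fun h => h.1, fun h => ⟨h, fun hc => ?_⟩⟩
    rw [Sym2.eq_iff] at hc
    rcases hc with ⟨rfl, rfl⟩ | ⟨rfl, rfl⟩
    · exact hva rfl
    · exact hvb rfl
  -- reachability
  have hreach : G'.Reachable a b := by
    by_contra hnr
    set G'' : SimpleGraph V :=
      { Adj := fun x y => G'.Adj x y ∧ G'.Reachable a x ∧ G'.Reachable a y
        symm := ⟨by rintro x y ⟨h1, h2, h3⟩; exact ⟨h1.symm, h3, h2⟩⟩
        loopless := ⟨by rintro x ⟨h1, -⟩; exact G'.loopless.irrefl x h1⟩ } with hG''def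
    have hclosed : ∀ x y, G'.Adj x y → G'.Reachable a x → G'.Reachable a y :=
      fun x y hxy hx => hx.trans hxy.reachable
    have hA : ∀ v, G'.Reachable a v → G''.neighborFinset v = G'.neighborFinset v := by
      intro v hv
      ext u
      simp only [mem_neighborFinset, hG''def]
      exact ⟨fun h => h.1, fun h => ⟨h, hv, hclosed v u h hv⟩⟩
    have hB : ∀ v, ¬ G'.Reachable a v → G''.neighborFinset v = ∅ := by
      intro v hv
      ext u
      simp only [mem_neighborFinset, hG''def, notMem_empty, iff_false]
      rintro ⟨-, h2, -⟩
      exact hv h2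
    have hsum : Even (∑ v, G''.degree v) := by
      rw [sum_degrees_eq_twice_card_edges]; exact even_two_mul _
    have hsplit : (∑ v, G''.degree v)
        = ∑ v ∈ univ.filter (fun v => G'.Reachable a v), G'.degree v := by
      rw [← Finset.sum_filter_add_sum_filter_not univ (fun v => G'.Reachable a v)]
      have h2 : ∑ v ∈ univ.filter (fun v => ¬ G'.Reachable a v), G''.degree v = 0 := by
        apply Finset.sum_eq_zero
        intro v hv
        rw [mem_filter] at hv
        rw [degree, hB v hv.2, card_empty]
      rw [h2, add_zero]
      apply Finset.sum_congr rfl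
      intro v hv
      rw [mem_filter] at hv
      rw [degree, degree, hA v hv.2]
    have ha_mem : a ∈ univ.filter (fun v => G'.Reachable a v) := by
      simp [Reachable.refl]
    have hodd : Odd (∑ v ∈ univ.filter (fun v => G'.Reachable a v), G'.degree v) := by
      rw [← Finset.add_sum_erase _ _ ha_mem]
      have hdega_odd : Odd (G'.degree a) := by
        rw [hdeg'a, hdeg a]
        refine Nat.Even.sub_odd ?_ (hev a) odd_one
        have : b ∈ G.neighborFinset a := by simpa using hb_adj
        have h1 : 0 < G.degree a := Finset.card_pos.mpr ⟨b, this⟩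
        rw [hdeg a] at h1
        omega
      refine hdega_odd.add_even ?_
      apply Finset.even_sum
      intro v hv
      rw [mem_erase, mem_filter] at hv
      have hvb : v ≠ b := fun h => hnr (h ▸ hv.2.2)
      rw [hdeg'other v hv.1 hvb, hdeg v]
      exact hev v
    rw [hsplit] at hsum
    exact (Nat.not_even_iff_odd.mpr hodd) hsum
  -- build the cycle
  obtain ⟨p⟩ := hreach
  have hle : G' ≤ G := by rw [hG'def]; exact deleteEdges_le _
  set q : G.Walk a b := (p.toPath : G'.Walk a b).mapLe hle with hqdef
  have hq : q.IsPath := (p.toPath.2).mapLe hle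
  have hq_edges : s(a, b) ∉ q.edges := by
    rw [hqdef, edges_mapLe]
    intro hmem
    have := Walk.edges_subset_edgeSet _ hmem
    rw [hG'def, edgeSet_deleteEdges] at this
    exact this.2 rfl
  set r : G.Walk b a := q.reverse with hrdef
  have hcyc : (Walk.cons hb_adj r).IsCycle := by
    rw [Walk.cons_isCycle_iff]
    constructor
    · exact hq.reverse
    · rw [hrdef, Walk.edges_reverse, List.mem_reverse]; exact hq_edges
  set w' : (⊤ : SimpleGraph V).Walk a a := (Walk.cons hb_adj r).mapLe le_top with hw'def
  refine ⟨w'.edges.toFinset, ?_, a, w', hcyc.mapLe le_top, rfl⟩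
  intro e he
  rw [List.mem_toFinset, hw'def, edges_mapLe] at he
  have := Walk.edges_subset_edgeSet _ he
  rw [hGdef, edgeSet_fromEdgeSet] at this
  exact_mod_cast this.1


lemma exists_odd_cycle (S : Finset (Sym2 V)) (hnd : ∀ e ∈ S, ¬ e.IsDiag)
    (hodd : Odd S.card) (hev : ∀ v, Even (degS S v)) :
    ∃ C ⊆ S, IsOddCycleEdgeSet C := by
  classical
  suffices h : ∀ m : ℕ, ∀ S : Finset (Sym2 V), (∀ e ∈ S, ¬ e.IsDiag) → Odd S.card →
      (∀ v, Even (degS S v)) → S.card = m → ∃ C ⊆ S, IsOddCycleEdgeSet C from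
    h S.card S hnd hodd hev rfl
  clear hnd hodd hev S
  intro m
  induction m using Nat.strong_induction_on with
  | _ m ih =>
  intro S hnd hodd hev hcard
  have hne : S.Nonempty := card_pos.mp (by rcases hodd with ⟨k, hk⟩; omega)
  obtain ⟨C, hCS, hC⟩ := exists_cycle_sub S hnd hev hne
  by_cases hCodd : Odd C.card
  · exact ⟨C, hCS, hC, hCodd⟩
  · have hCev : Even C.card := Nat.not_odd_iff_even.mp hCodd
    have hCpos := cycle_card_pos hC
    have hle := card_le_card hCS
    set S' := S \ C with hS'
    have hsub' : S' ⊆ S := sdiff_subset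
    have hcard' : S'.card = S.card - C.card := card_sdiff_of_subset hCS
    have hlt : S'.card < S.card := by omega
    have hodd' : Odd S'.card := by
      rw [hcard']; exact Nat.Odd.sub_even hle hodd hCev
    have hev' : ∀ v, Even (degS S' v) := by
      intro v
      have hfle : degS C v ≤ degS S v :=
        card_le_card (filter_subset_filter _ hCS)
      have h1 : S'.filter (fun e => v ∈ e)
          = S.filter (fun e => v ∈ e) \ C.filter (fun e => v ∈ e) := by
        ext e; simp only [hS', mem_filter, mem_sdiff]; tauto
      have h2 : degS S' v = degS S v - degS C v := by
        rw [degS, h1, card_sdiff_of_subset (filter_subset_filter _ hCS)]; rfl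
      rw [h2]
      exact (Nat.even_sub hfle).mpr (iff_of_true (hev v) (cycle_even_degS hC v))
    obtain ⟨C', h1, h2⟩ := ih S'.card (by omega) S' (fun e he => hnd e (hsub' he)) hodd' hev' rfl
    exact ⟨C', h1.trans hsub', h2⟩

end OddCycleAux

open OddCycleAux

/-- An edge set `O` on vertex set `[n]` contains an odd cycle iff `e₀` lies in the
`𝔽₂`-span of `{e₀ + eᵢ + eⱼ : {i, j} ∈ O}` in `𝔽₂^{n+1}`. -/
theorem odd_cycle_iff_mem_span (n : ℕ) (O : Finset (Sym2 (Fin n)))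
    (hO : ∀ e ∈ O, ¬ e.IsDiag) :
    (∃ C ⊆ O, IsOddCycleEdgeSet C) ↔
      (Pi.single (0 : Fin (n + 1)) (1 : ZMod 2)) ∈ Submodule.span (ZMod 2)
        {x : Fin (n + 1) → ZMod 2 | ∃ e ∈ O, ∃ i j : Fin n, e = s(i, j) ∧
          x = Pi.single (0 : Fin (n + 1)) (1 : ZMod 2)
            + Pi.single i.succ 1 + Pi.single j.succ 1} := by
  classical
  have hvecmem : ∀ e : Sym2 (Fin n), e ∈ O →
      vec e ∈ {x : Fin (n + 1) → ZMod 2 | ∃ e ∈ O, ∃ i j : Fin n, e = s(i, j) ∧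
        x = Pi.single (0 : Fin (n + 1)) (1 : ZMod 2)
          + Pi.single i.succ 1 + Pi.single j.succ 1} := by
    intro e
    induction e using Sym2.ind with
    | _ i j => exact fun he => ⟨s(i, j), he, i, j, rfl, rfl⟩
  constructor
  · rintro ⟨C, hCO, hCcyc, hCodd⟩
    have hCnd : ∀ e ∈ C, ¬ e.IsDiag := fun e he => hO e (hCO he)
    have hsum : (∑ e ∈ C, vec e) = Pi.single 0 1 := by
      funext k
      induction k using Fin.cases with
      | zero =>
        rw [sum_vec_zero, Pi.single_eq_same]
        exact ZMod.natCast_eq_one_iff_odd.mpr hCodd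
      | succ v =>
        rw [sum_vec_succ C hCnd v, Pi.single_eq_of_ne (Fin.succ_ne_zero v)]
        exact ZMod.natCast_eq_zero_iff_even.mpr (cycle_even_degS hCcyc v)
    have hmem : (∑ e ∈ C, vec e) ∈ Submodule.span (ZMod 2)
        {x : Fin (n + 1) → ZMod 2 | ∃ e ∈ O, ∃ i j : Fin n, e = s(i, j) ∧
          x = Pi.single (0 : Fin (n + 1)) (1 : ZMod 2)
            + Pi.single i.succ 1 + Pi.single j.succ 1} :=
      Submodule.sum_mem _ fun e he => Submodule.subset_span (hvecmem e (hCO he))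
    rwa [hsum] at hmem
  · intro hmem
    have hinj : ∀ x ∈ O, ∀ y ∈ O, vec x = vec y → x = y :=
      fun x hx y hy h => vec_inj (hO x hx) (hO y hy) h
    have himg : {x : Fin (n + 1) → ZMod 2 | ∃ e ∈ O, ∃ i j : Fin n, e = s(i, j) ∧
        x = Pi.single (0 : Fin (n + 1)) (1 : ZMod 2)
          + Pi.single i.succ 1 + Pi.single j.succ 1} = ↑(O.image vec) := by
      ext x
      simp only [Set.mem_setOf_eq, coe_image, Set.mem_image, mem_coe]
      constructor
      · rintro ⟨e, heO, i, j, rfl, rfl⟩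
        exact ⟨s(i, j), heO, rfl⟩
      · rintro ⟨e, heO, rfl⟩
        exact hvecmem e heO
    rw [himg, Submodule.mem_span_finset] at hmem
    obtain ⟨f, hf⟩ := hmem
    set S := O.filter (fun e => f (vec e) = 1) with hSdef
    have hSsub : S ⊆ O := filter_subset _ _
    have hSnd : ∀ e ∈ S, ¬ e.IsDiag := fun e he => hO e (hSsub he)
    have hsum : ∑ e ∈ S, vec e = Pi.single 0 1 := by
      have hstep : ∑ x ∈ O.image vec, f x • x = ∑ e ∈ S, vec e := by
        rw [Finset.sum_image hinj, hSdef, Finset.sum_filter]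
        apply Finset.sum_congr rfl
        intro e _
        rcases (show ∀ c : ZMod 2, c = 0 ∨ c = 1 by decide) (f (vec e)) with h | h <;>
          simp [h]
      exact hstep.symm.trans hf.2
    have hodd : Odd S.card := by
      have h0 := congrFun hsum 0
      rw [sum_vec_zero, Pi.single_eq_same] at h0
      exact ZMod.natCast_eq_one_iff_odd.mp h0
    have hev : ∀ v, Even (degS S v) := by
      intro v
      have h0 := congrFun hsum v.succ
      rw [sum_vec_succ S hSnd v, Pi.single_eq_of_ne (Fin.succ_ne_zero v)] at h0
      exact ZMod.natCast_eq_zero_iff_even.mp h0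
    obtain ⟨C, hCS, hC⟩ := exists_odd_cycle S hSnd hodd hev
    exact ⟨C, hCS.trans hSsub, hC⟩
end

section
/- The maximum number of edges in a graph on n vertices containing no even cycle is ⌊3(n−1)/2⌋. -/
open SimpleGraph

namespace NECaux

variable {V : Type*} [DecidableEq V] {G : SimpleGraph V}

/-- no cycle has even length -/
def NEC (G : SimpleGraph V) : Prop :=
  ∀ ⦃v : V⦄ (w : G.Walk v v), w.IsCycle → ¬ Even w.length

lemma length_rotate {v u : V} (c : G.Walk v v) (h : u ∈ c.support) :
    (c.rotate u h).length = c.length := by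
  rw [Walk.rotate, Walk.length_append, add_comm, ← Walk.length_append, c.take_spec h]

lemma end_mem_tail_support {v : V} (c : G.Walk v v) (hc : c ≠ Walk.nil) :
    v ∈ c.support.tail := by
  cases c with
  | nil => exact absurd rfl hc
  | cons h q => simpa using q.end_mem_support

lemma mem_support_rotate_iff {v u z : V} (c : G.Walk v v) (hc : c ≠ Walk.nil)
    (h : u ∈ c.support) : z ∈ (c.rotate u h).support ↔ z ∈ c.support := by
  have hrot : (c.rotate u h).support.tail ~r c.support.tail := c.support_rotate u h
  have hnil : (c.rotate u h) ≠ Walk.nil := by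
    intro hn
    have := congrArg Walk.length hn
    rw [length_rotate] at this
    simp only [Walk.length_nil] at this
    exact hc (Walk.length_eq_zero_iff.mp this).eq_nil
  constructor
  · intro hz
    rcases (Walk.mem_support_iff _).mp hz with rfl | hz
    · exact h
    · rw [Walk.mem_support_iff]
      exact Or.inr (hrot.mem_iff.mp hz)
  · intro hz
    rcases (Walk.mem_support_iff _).mp hz with rfl | hz
    · rw [Walk.mem_support_iff]
      exact Or.inr (hrot.mem_iff.mpr (end_mem_tail_support c hc))
    · rw [Walk.mem_support_iff]
      exact Or.inr (hrot.mem_iff.mpr hz)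

lemma isPath_loop_eq_nil {v : V} {p : G.Walk v v} (hp : p.IsPath) : p = Walk.nil := by
  cases p with
  | nil => rfl
  | cons h q =>
    rw [Walk.cons_isPath_iff] at hp
    exact absurd q.end_mem_support hp.2

/-- a path containing the edge between its endpoints has length 1 -/
lemma length_eq_one_of_edge {u v : V} {p : G.Walk u v} (hp : p.IsPath)
    (he : s(u, v) ∈ p.edges) : p.length = 1 := by
  cases p with
  | nil => simp at he
  | cons h q =>
    rename_i w
    rw [Walk.edges_cons, List.mem_cons] at he
    rw [Walk.cons_isPath_iff] at hp
    rcases he with he | he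
    · rw [Sym2.eq_iff] at he
      rcases he with ⟨-, rfl⟩ | ⟨rfl, rfl⟩
      · rw [isPath_loop_eq_nil hp.1]
        simp
      · exact absurd rfl h.ne
    · exact absurd (q.fst_mem_support_of_mem_edges he) hp.2

lemma length_one_edge {u v : V} {p : G.Walk u v} (hl : p.length = 1) :
    s(u, v) ∈ p.edges := by
  cases p with
  | nil => simp at hl
  | cons h q =>
    rename_i w
    have hq : q.length = 0 := by
      have := Walk.length_cons h q
      omega
    have : w = v := Walk.eq_of_length_eq_zero hq
    subst this
    simp

/-- every vertex of a non-nil walk is incident to one of its edges -/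
lemma exists_incident_edge {u v z : V} : ∀ (p : G.Walk u v), p.length ≠ 0 →
    z ∈ p.support → ∃ y, s(z, y) ∈ p.edges := by
  intro p
  induction p with
  | nil => simp
  | @cons a b c h q ih =>
    intro hnil hz
    rw [Walk.support_cons, List.mem_cons] at hz
    rcases hz with rfl | hz
    · exact ⟨b, by simp⟩
    · rcases Nat.eq_zero_or_pos q.length with hq | hq
      · have hbc : b = c := Walk.eq_of_length_eq_zero hq
        subst hbc
        have : z = b := by
          cases q with
          | nil => simpa using hz
          | cons h' q' => simp [Walk.length_cons] at hq
        subst this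
        exact ⟨a, by simp [Sym2.eq_swap]⟩
      · obtain ⟨y, hy⟩ := ih (by omega) hz
        exact ⟨y, by simp [hy]⟩


lemma isCycle_append {x y : V} {p : G.Walk x y} {r : G.Walk y x}
    (hp : p.IsPath) (hr : r.IsPath) (hxy : x ≠ y)
    (hdisj : ∀ z, z ∈ p.support → z ∈ r.support → z = x ∨ z = y)
    (hlen : 3 ≤ p.length + r.length) : (p.append r).IsCycle := by
  rw [Walk.isCycle_def]
  refine ⟨?_, ?_, ?_⟩
  · -- trail
    rw [Walk.isTrail_def, Walk.edges_append, List.nodup_append]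
    refine ⟨hp.isTrail.edges_nodup, hr.isTrail.edges_nodup, ?_⟩
    intro e hep e' her hee'
    subst hee'
    induction e with
    | h a b =>
      have hadj : G.Adj a b := p.adj_of_mem_edges hep
      have hap : a ∈ p.support := p.fst_mem_support_of_mem_edges hep
      have hbp : b ∈ p.support := p.snd_mem_support_of_mem_edges hep
      have har : a ∈ r.support := r.fst_mem_support_of_mem_edges her
      have hbr : b ∈ r.support := r.snd_mem_support_of_mem_edges her
      have ha := hdisj a hap har
      have hb := hdisj b hbp hbr
      have hab : a ≠ b := hadj.ne
      -- conclude e = s(x,y)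
      have hexy : s(a, b) = s(x, y) := by
        rcases ha with rfl | rfl <;> rcases hb with rfl | rfl
        · exact absurd rfl hab
        · rfl
        · exact Sym2.eq_swap
        · exact absurd rfl hab
      have hp1 : p.length = 1 := length_eq_one_of_edge hp (hexy ▸ hep)
      have hr1 : r.length = 1 := by
        refine length_eq_one_of_edge hr ?_
        have : s(a, b) = s(y, x) := hexy.trans Sym2.eq_swap
        exact this ▸ her
      omega
  · -- nonnil
    intro hn
    have := congrArg Walk.length hn
    rw [Walk.length_append, Walk.length_nil] at this
    omega
  · -- support tail nodup
    have hsupp : (p.append r).support.tail = p.support.tail ++ r.support.tail := by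
      rw [Walk.support_append]
      exact List.tail_append_of_ne_nil p.support_ne_nil
    rw [hsupp, List.nodup_append]
    have hpn : p.support.Nodup := hp.support_nodup
    have hrn : r.support.Nodup := hr.support_nodup
    refine ⟨hpn.tail, hrn.tail, ?_⟩
    intro z hzp z' hzr hzz'
    subst hzz'
    have hzp' : z ∈ p.support := List.mem_of_mem_tail hzp
    have hzr' : z ∈ r.support := List.mem_of_mem_tail hzr
    rcases hdisj z hzp' hzr' with rfl | rfl
    · -- z = x : x at head of p.support, so x ∉ tail
      have := Walk.support_eq_cons p
      rw [this] at hpn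
      exact (List.nodup_cons.mp hpn).1 hzp
    · have := Walk.support_eq_cons r
      rw [this] at hrn
      exact (List.nodup_cons.mp hrn).1 hzr

lemma isCycle_transfer {v : V} {p : G.Walk v v} {H : SimpleGraph V}
    (hp : ∀ e ∈ p.edges, e ∈ H.edgeSet) (hc : p.IsCycle) :
    (p.transfer H hp).IsCycle := by
  rw [Walk.isCycle_def] at hc ⊢
  refine ⟨?_, ?_, ?_⟩
  · rw [Walk.isTrail_def, Walk.edges_transfer]
    exact hc.1.edges_nodup
  · intro hn
    have := congrArg Walk.length hn
    rw [Walk.length_transfer, Walk.length_nil] at this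
    exact hc.2.1 (Walk.length_eq_zero_iff.mp this).eq_nil
  · rw [Walk.support_transfer]
    exact hc.2.2

/-- two arcs of a cycle between two distinct vertices on it -/
lemma arcs_of_cycle {v x y : V} {c : G.Walk v v} (hc : c.IsCycle)
    (hx : x ∈ c.support) (hy : y ∈ c.support) (hxy : x ≠ y) :
    ∃ (p q : G.Walk x y), p.IsPath ∧ q.IsPath ∧
      p.length + q.length = c.length ∧ 1 ≤ p.length ∧ 1 ≤ q.length ∧
      (∀ z, z ∈ p.support → z ∈ c.support) ∧ (∀ z, z ∈ q.support → z ∈ c.support) ∧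
      (∀ z, z ∈ p.support → z ∈ q.support → z = x ∨ z = y) ∧
      (∀ e ∈ p.edges, e ∈ c.edges) ∧ (∀ e ∈ q.edges, e ∈ c.edges) := by
  classical
  have hcnil : c ≠ Walk.nil := hc.ne_nil
  set c' := c.rotate x hx with hc'def
  have hc' : c'.IsCycle := hc.rotate hx
  have hc'nil : c' ≠ Walk.nil := hc'.ne_nil
  have hmemc' : ∀ z, z ∈ c'.support ↔ z ∈ c.support := fun z =>
    mem_support_rotate_iff c hcnil hx
  have hy' : y ∈ c'.support := (hmemc' y).mpr hy
  set p := c'.takeUntil y hy' with hpdef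
  set q' := c'.dropUntil y hy' with hq'def
  have hspec : p.append q' = c' := c'.take_spec hy'
  -- support decomposition
  have hsupp : c'.support = p.support ++ q'.support.tail := by
    rw [← hspec, Walk.support_append]
  have hps : p.support = x :: p.support.tail := Walk.support_eq_cons p
  have hqs : q'.support = y :: q'.support.tail := Walk.support_eq_cons q'
  have hc's : c'.support = x :: c'.support.tail := Walk.support_eq_cons c'
  have htail : c'.support.tail = p.support.tail ++ q'.support.tail := by
    have := congrArg List.tail hsupp
    rwa [List.tail_append_of_ne_nil p.support_ne_nil] at this
  have hTnodup : c'.support.tail.Nodup := hc'.2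
  rw [htail, List.nodup_append] at hTnodup
  obtain ⟨hPnd, hQnd, hPQdisj⟩ := hTnodup
  -- x is the endpoint of q', so x ∈ q'.support.tail
  have hxq' : x ∈ q'.support.tail := by
    have : x ∈ q'.support := q'.end_mem_support
    rw [hqs, List.mem_cons] at this
    rcases this with h | h
    · exact absurd h hxy
    · exact h
  have hxP : x ∉ p.support.tail := fun hxp => hPQdisj x hxp x hxq' rfl
  have hyp : y ∈ p.support.tail := by
    have : y ∈ p.support := p.end_mem_support
    rw [hps, List.mem_cons] at this
    rcases this with h | h
    · exact absurd h.symm hxy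
    · exact h
  have hyQ : y ∉ q'.support.tail := fun hyq => hPQdisj y hyp y hyq rfl
  have hppath : p.IsPath := by
    rw [Walk.isPath_def, hps]
    exact List.nodup_cons.mpr ⟨hxP, hPnd⟩
  have hq'path : q'.IsPath := by
    rw [Walk.isPath_def, hqs]
    exact List.nodup_cons.mpr ⟨hyQ, hQnd⟩
  have hlensum : p.length + q'.length = c.length := by
    have := congrArg Walk.length hspec
    rw [Walk.length_append] at this
    rw [this, hc'def, length_rotate]
  refine ⟨p, q'.reverse, hppath, hq'path.reverse, ?_, ?_, ?_, ?_, ?_, ?_, ?_, ?_⟩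
  · rw [Walk.length_reverse]; exact hlensum
  · rcases Nat.eq_zero_or_pos p.length with h0 | h0
    · exact absurd (Walk.eq_of_length_eq_zero h0) hxy
    · exact h0
  · rw [Walk.length_reverse]
    rcases Nat.eq_zero_or_pos q'.length with h0 | h0
    · exact absurd (Walk.eq_of_length_eq_zero h0).symm hxy
    · exact h0
  · intro z hz
    exact (hmemc' z).mp (c'.support_takeUntil_subset hy' hz)
  · intro z hz
    rw [Walk.support_reverse, List.mem_reverse] at hz
    exact (hmemc' z).mp (c'.support_dropUntil_subset hy' hz)
  · intro z hzp hzq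
    rw [Walk.support_reverse, List.mem_reverse] at hzq
    rw [hps, List.mem_cons] at hzp
    rw [hqs, List.mem_cons] at hzq
    rcases hzp with rfl | hzp
    · exact Or.inl rfl
    · rcases hzq with rfl | hzq
      · exact Or.inr rfl
      · exact absurd hzq (fun h => hPQdisj z hzp z h rfl)
  · intro e he
    have : e ∈ c'.edges := c'.edges_takeUntil_subset hy' he
    exact (c.rotate_edges x hx).mem_iff.mp this
  · intro e he
    rw [Walk.edges_reverse, List.mem_reverse] at he
    have : e ∈ c'.edges := c'.edges_dropUntil_subset hy' he
    exact (c.rotate_edges x hx).mem_iff.mp this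

lemma theta (hG : NEC G) {v c₁ c₂ : V} {c : G.Walk v v} (hc : c.IsCycle)
    (h1 : c₁ ∈ c.support) (h2 : c₂ ∈ c.support) (h12 : c₁ ≠ c₂)
    {R : G.Walk c₂ c₁} (hR : R.IsPath) (hR2 : 2 ≤ R.length)
    (hdisjR : ∀ z, z ∈ R.support → z ∈ c.support → z = c₁ ∨ z = c₂) : False := by
  obtain ⟨p, q, hp, hq, hsum, hp1, hq1, hpc, hqc, hpq, hpe, hqe⟩ :=
    arcs_of_cycle hc h1 h2 h12
  have K1 : (p.append R).IsCycle :=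
    isCycle_append hp hR h12 (fun z hzp hzr => hdisjR z hzr (hpc z hzp)) (by omega)
  have K2 : (q.append R).IsCycle :=
    isCycle_append hq hR h12 (fun z hzp hzr => hdisjR z hzr (hqc z hzp)) (by omega)
  have o1 := hG _ K1
  have o2 := hG _ K2
  have oc := hG c hc
  rw [Walk.length_append, Nat.not_even_iff] at o1 o2
  rw [Nat.not_even_iff] at oc
  omega

lemma no_chord (hG : NEC G) {v x y : V} {c : G.Walk v v} (hc : c.IsCycle)
    (hx : x ∈ c.support) (hy : y ∈ c.support) (hadj : G.Adj x y)
    (hne : s(x, y) ∉ c.edges) : False := by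
  obtain ⟨p, q, hp, hq, hsum, hp1, hq1, hpc, hqc, hpq, hpe, hqe⟩ :=
    arcs_of_cycle hc hx hy hadj.ne
  set R : G.Walk y x := Walk.cons hadj.symm Walk.nil with hRdef
  have hRp : R.IsPath := by
    rw [Walk.isPath_def, hRdef]
    simp [hadj.ne']
  have hRsupp : R.support = [y, x] := by simp [hRdef]
  have hdisjR : ∀ z ∈ p.support, z ∈ R.support → z = x ∨ z = y := by
    intro z _ hzR
    rw [hRsupp] at hzR
    simp only [List.mem_cons, List.not_mem_nil, or_false] at hzR
    tauto
  have hdisjR' : ∀ z ∈ q.support, z ∈ R.support → z = x ∨ z = y := by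
    intro z _ hzR
    rw [hRsupp] at hzR
    simp only [List.mem_cons, List.not_mem_nil, or_false] at hzR
    tauto
  have hplen : 2 ≤ p.length := by
    by_contra h
    have h1 : p.length = 1 := by omega
    exact hne (hpe _ (length_one_edge h1))
  have hqlen : 2 ≤ q.length := by
    by_contra h
    have h1 : q.length = 1 := by omega
    exact hne (hqe _ (length_one_edge h1))
  have hRlen : R.length = 1 := by simp [hRdef]
  have K1 : (p.append R).IsCycle := isCycle_append hp hRp hadj.ne hdisjR (by omega)
  have K2 : (q.append R).IsCycle := isCycle_append hq hRp hadj.ne hdisjR' (by omega)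
  have o1 := hG _ K1
  have o2 := hG _ K2
  have oc := hG c hc
  rw [Walk.length_append, Nat.not_even_iff] at o1 o2
  rw [Nat.not_even_iff] at oc
  omega

lemma unique_nbr (hG : NEC G) {v x c₁ c₂ : V} {c : G.Walk v v} (hc : c.IsCycle)
    (hx : x ∉ c.support) (h1 : c₁ ∈ c.support) (h2 : c₂ ∈ c.support)
    (ha1 : G.Adj x c₁) (ha2 : G.Adj x c₂) : c₁ = c₂ := by
  by_contra h12
  have hxc1 : x ≠ c₁ := ha1.ne
  have hxc2 : x ≠ c₂ := ha2.ne
  set R : G.Walk c₂ c₁ := Walk.cons ha2.symm (Walk.cons ha1 Walk.nil) with hRdef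
  have hRsupp : R.support = [c₂, x, c₁] := by simp [hRdef]
  have h21 : c₂ ≠ c₁ := fun h => h12 h.symm
  have hRp : R.IsPath := by
    rw [Walk.isPath_def, hRsupp]
    simp [Ne.symm hxc2, h21, hxc1]
  refine theta hG hc h1 h2 h12 hRp (by simp [hRdef]) ?_
  intro z hzR hzc
  rw [hRsupp] at hzR
  simp only [List.mem_cons, List.not_mem_nil, or_false] at hzR
  rcases hzR with rfl|rfl|rfl
  · exact Or.inr rfl
  · exact absurd hzc hx
  · exact Or.inl rfl


/-- contract a set of vertices `S` to the vertex `v₀` -/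
def contract (G : SimpleGraph V) (S : List V) (v₀ : V) : SimpleGraph V where
  Adj x y := x ≠ y ∧ ∃ a b, G.Adj a b ∧
    (if a ∈ S then v₀ else a) = x ∧ (if b ∈ S then v₀ else b) = y
  symm := by
    constructor
    rintro x y ⟨hxy, a, b, hab, ha, hb⟩
    exact ⟨hxy.symm, b, a, hab.symm, hb, ha⟩
  loopless := ⟨fun x h => h.1 rfl⟩

section Contract

variable {S : List V} {v₀ : V}

lemma contract_isolated (hv₀ : v₀ ∈ S) {x : V} (hxS : x ∈ S) (hx : x ≠ v₀) (y : V) :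
    ¬ (contract G S v₀).Adj x y := by
  rintro ⟨hxy, a, b, hab, ha, hb⟩
  by_cases haS : a ∈ S
  · rw [if_pos haS] at ha
    exact hx ha.symm
  · rw [if_neg haS] at ha
    exact haS (ha ▸ hxS)

lemma contract_adj_out (hv₀ : v₀ ∈ S) {x y : V} (hx : x ∉ S) (hy : y ∉ S) :
    (contract G S v₀).Adj x y ↔ G.Adj x y := by
  constructor
  · rintro ⟨hxy, a, b, hab, ha, hb⟩
    by_cases haS : a ∈ S
    · rw [if_pos haS] at ha
      exact absurd (ha ▸ hv₀) hx
    · by_cases hbS : b ∈ S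
      · rw [if_pos hbS] at hb
        exact absurd (hb ▸ hv₀) hy
      · rw [if_neg haS] at ha
        rw [if_neg hbS] at hb
        exact ha ▸ hb ▸ hab
  · intro h
    exact ⟨h.ne, x, y, h, if_neg hx, if_neg hy⟩

lemma contract_adj_hub (hv₀ : v₀ ∈ S) {x : V} (hx : x ∉ S) :
    (contract G S v₀).Adj v₀ x ↔ ∃ cc ∈ S, G.Adj cc x := by
  constructor
  · rintro ⟨hxy, a, b, hab, ha, hb⟩
    by_cases hbS : b ∈ S
    · rw [if_pos hbS] at hb
      exact absurd (hb ▸ hv₀) hx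
    · rw [if_neg hbS] at hb
      subst hb
      by_cases haS : a ∈ S
      · exact ⟨a, haS, hab⟩
      · rw [if_neg haS] at ha
        exact absurd (ha ▸ haS) (fun h => h hv₀)
  · rintro ⟨cc, hccS, hcc⟩
    exact ⟨fun h => hx (h ▸ hv₀), cc, x, hcc, if_pos hccS, if_neg hx⟩

lemma contract_NEC (hG : NEC G) {v₀ : V} {c : G.Walk v₀ v₀} (hc : c.IsCycle) :
    NEC (contract G c.support v₀) := by
  classical
  set G' := contract G c.support v₀ with hG'def
  have hv₀ : v₀ ∈ c.support := c.start_mem_support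
  intro u w hw
  by_cases hv : v₀ ∈ w.support
  · -- rotate the cycle to v₀
    have hwr : (w.rotate v₀ hv).IsCycle := hw.rotate hv
    have hlenr : (w.rotate v₀ hv).length = w.length := length_rotate w hv
    suffices h : ¬ Even (w.rotate v₀ hv).length by rwa [hlenr] at h
    generalize (w.rotate v₀ hv) = w' at hwr
    clear hlenr hv hw w u
    cases w' with
    | nil => exact absurd (Walk.isCycle_def _ |>.mp hwr).2.1 (not_not.mpr rfl)
    | cons h₁ q =>
      rename_i x₁
      obtain ⟨hqpath, hqedge⟩ := (Walk.cons_isCycle_iff q h₁).mp hwr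
      have hx₁v : x₁ ≠ v₀ := h₁.ne'
      have h3 : 3 ≤ q.length + 1 := by
        have := hwr.three_le_length
        simpa using this
      -- destructure q.reverse
      obtain ⟨x_m, h₂, M, hqr⟩ := Walk.exists_eq_cons_of_ne h₁.ne q.reverse
      have hqrev : q.reverse.IsPath := hqpath.reverse
      rw [hqr, Walk.cons_isPath_iff] at hqrev
      obtain ⟨hMpath, hv₀M⟩ := hqrev
      have hxmv : x_m ≠ v₀ := h₂.ne'
      have hlens : q.length = M.length + 1 := by
        have := congrArg Walk.length hqr
        rw [Walk.length_reverse, Walk.length_cons] at this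
        omega
      -- x₁, x_m outside the cycle support
      have hx₁S : x₁ ∉ c.support := fun hmem =>
        contract_isolated hv₀ hmem hx₁v v₀ h₁.symm
      have hxmS : x_m ∉ c.support := fun hmem =>
        contract_isolated hv₀ hmem hxmv v₀ h₂.symm
      -- M avoids c.support entirely
      have hMout : ∀ z ∈ M.support, z ∉ c.support := by
        intro z hz hzS
        have hzv : z ≠ v₀ := fun h => hv₀M (h ▸ hz)
        rcases Nat.eq_zero_or_pos M.length with h0 | h0
        · have : x_m = x₁ := Walk.eq_of_length_eq_zero h0
          cases M with
          | nil =>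
            simp only [Walk.support_nil, List.mem_singleton] at hz
            exact hxmS (hz ▸ hzS)
          | cons h' q' => simp [Walk.length_cons] at h0
        · obtain ⟨y, hy⟩ := exists_incident_edge M (by omega) hz
          exact contract_isolated hv₀ hzS hzv y (M.adj_of_mem_edges hy)
      -- M transfers to G
      have hMedges : ∀ e ∈ M.edges, e ∈ G.edgeSet := by
        intro e he
        induction e with
        | h a b =>
          have hadj := M.adj_of_mem_edges he
          have haM := M.fst_mem_support_of_mem_edges he
          have hbM := M.snd_mem_support_of_mem_edges he
          exact (contract_adj_out hv₀ (hMout a haM) (hMout b hbM)).mp hadj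
      set MG := M.transfer G hMedges with hMGdef
      have hMGpath : MG.IsPath := hMpath.transfer _
      have hMGsupp : MG.support = M.support := M.support_transfer _
      have hMGlen : MG.length = M.length := M.length_transfer _
      -- the attachments
      obtain ⟨c₁, hc₁S, hc₁adj⟩ := (contract_adj_hub hv₀ hx₁S).mp h₁
      obtain ⟨c₂, hc₂S, hc₂adj⟩ := (contract_adj_hub hv₀ hxmS).mp h₂
      by_cases h12 : c₁ = c₂
      · -- one cycle in G through c₁
        subst h12
        have hxm1 : x_m ≠ x₁ := by
          intro h
          subst h
          have : M = Walk.nil := isPath_loop_eq_nil hMpath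
          rw [this] at hlens
          simp only [Walk.length_nil] at hlens
          omega
        set R : G.Walk x₁ x_m :=
          Walk.cons hc₁adj.symm (Walk.cons hc₂adj Walk.nil) with hRdef
        have hRsupp : R.support = [x₁, c₁, x_m] := by simp [hRdef]
        have hRpath : R.IsPath := by
          rw [Walk.isPath_def, hRsupp]
          have h1 : x₁ ≠ c₁ := fun h => hx₁S (h ▸ hc₁S)
          have h2 : c₁ ≠ x_m := fun h => hxmS (h ▸ hc₁S)
          simp [h1, hxm1.symm, h2]
        have hK : (MG.append R).IsCycle := by
          refine isCycle_append hMGpath hRpath hxm1 ?_ ?_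
          · intro z hzM hzR
            rw [hRsupp] at hzR
            simp only [List.mem_cons, List.not_mem_nil, or_false] at hzR
            rcases hzR with rfl | rfl | rfl
            · exact Or.inr rfl
            · exact absurd hc₁S (hMout z (hMGsupp ▸ hzM))
            · exact Or.inl rfl
          · have : R.length = 2 := by simp [hRdef]
            omega
        have hodd := hG _ hK
        rw [Walk.length_append, Nat.not_even_iff] at hodd
        have hRlen : R.length = 2 := by simp [hRdef]
        rw [Walk.length_cons, hlens, Nat.not_even_iff]
        omega
      · -- theta configuration
        set R : G.Walk c₂ c₁ :=
          Walk.cons hc₂adj (MG.append (Walk.cons hc₁adj.symm Walk.nil)) with hRdef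
        have hMA : (MG.append (Walk.cons hc₁adj.symm Walk.nil)).support
            = MG.support ++ [c₁] := by
          rw [Walk.support_append]
          simp
        have hRsupp : R.support = c₂ :: (MG.support ++ [c₁]) := by
          rw [hRdef, Walk.support_cons, hMA]
        have hc₁M : c₁ ∉ MG.support := fun h => hMout c₁ (hMGsupp ▸ h) hc₁S
        have hc₂M : c₂ ∉ MG.support := fun h => hMout c₂ (hMGsupp ▸ h) hc₂S
        have hRpath : R.IsPath := by
          rw [Walk.isPath_def, hRsupp]
          rw [List.nodup_cons]
          constructor
          · intro hmem
            rw [List.mem_append, List.mem_singleton] at hmem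
            rcases hmem with h | h
            · exact hc₂M h
            · exact h12 h.symm
          · rw [List.nodup_append]
            refine ⟨hMGpath.support_nodup, List.nodup_singleton _, ?_⟩
            intro z hz z' hz' hzz'
            subst hzz'
            rw [List.mem_singleton] at hz'
            exact hc₁M (hz' ▸ hz)
        have hRlen : R.length = MG.length + 2 := by
          rw [hRdef, Walk.length_cons, Walk.length_append, Walk.length_cons,
            Walk.length_nil]
        refine absurd ?_ (not_not.mpr trivial)
        exfalso
        refine theta hG hc hc₁S hc₂S h12 hRpath (by omega) ?_
        intro z hzR hzc
        rw [hRsupp] at hzR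
        rw [List.mem_cons, List.mem_append, List.mem_singleton] at hzR
        rcases hzR with rfl | hz | rfl
        · exact Or.inr rfl
        · exact absurd hzc (hMout z (hMGsupp ▸ hz))
        · exact Or.inl rfl
  · -- v₀ not on the cycle: transfer everything to G
    have hedges : ∀ e ∈ w.edges, e ∈ G.edgeSet := by
      intro e he
      induction e with
      | h a b =>
        have hadj := w.adj_of_mem_edges he
        have haw := w.fst_mem_support_of_mem_edges he
        have hbw := w.snd_mem_support_of_mem_edges he
        have haS : a ∉ c.support := fun haS =>
          contract_isolated hv₀ haS (fun h => hv (h ▸ haw)) b hadj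
        have hbS : b ∉ c.support := fun hbS =>
          contract_isolated hv₀ hbS (fun h => hv (h ▸ hbw)) a hadj.symm
        exact (contract_adj_out hv₀ haS hbS).mp hadj
    have hwG := isCycle_transfer hedges hw
    have := hG _ hwG
    rwa [Walk.length_transfer] at this

lemma feq_cases (hv₀ : v₀ ∈ S) {x y : V}
    (h : (if x ∈ S then v₀ else x) = (if y ∈ S then v₀ else y)) :
    x = y ∨ (x ∈ S ∧ y ∈ S) := by
  by_cases hx : x ∈ S <;> by_cases hy : y ∈ S
  · exact Or.inr ⟨hx, hy⟩
  · rw [if_pos hx, if_neg hy] at h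
    exact absurd (h ▸ hv₀) hy
  · rw [if_neg hx, if_pos hy] at h
    exact absurd (h.symm ▸ hv₀) hx
  · rw [if_neg hx, if_neg hy] at h
    exact Or.inl h

lemma contract_pair_eq (hG : NEC G) {v₀ : V} {c : G.Walk v₀ v₀} (hc : c.IsCycle)
    {a b a' b' : V} (hab : G.Adj a b) (hab' : G.Adj a' b')
    (hout : ¬(a ∈ c.support ∧ b ∈ c.support))
    (hout' : ¬(a' ∈ c.support ∧ b' ∈ c.support))
    (h1 : (if a ∈ c.support then v₀ else a) = (if a' ∈ c.support then v₀ else a'))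
    (h2 : (if b ∈ c.support then v₀ else b) = (if b' ∈ c.support then v₀ else b')) :
    s(a, b) = s(a', b') := by
  have hv₀ : v₀ ∈ c.support := c.start_mem_support
  rcases feq_cases hv₀ h1 with rfl | ⟨haS, haS'⟩
  · rcases feq_cases hv₀ h2 with rfl | ⟨hbS, hbS'⟩
    · rfl
    · have haO : a ∉ c.support := fun h => hout ⟨h, hbS⟩
      have : b = b' := unique_nbr hG hc haO hbS hbS' hab hab'
      rw [this]
  · rcases feq_cases hv₀ h2 with rfl | ⟨hbS, hbS'⟩
    · have hbO : b ∉ c.support := fun h => hout ⟨haS, h⟩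
      have : a = a' := unique_nbr hG hc hbO haS haS' hab.symm hab'.symm
      rw [this]
    · exact absurd ⟨haS, hbS⟩ hout

lemma contract_edge_bound [Finite V] (hG : NEC G) {v₀ : V} {c : G.Walk v₀ v₀} (hc : c.IsCycle) :
    G.edgeSet.ncard ≤ c.length + (contract G c.support v₀).edgeSet.ncard := by
  classical
  have hv₀ : v₀ ∈ c.support := c.start_mem_support
  set G' := contract G c.support v₀ with hG'def
  set f : V → V := fun a => if a ∈ c.support then v₀ else a with hfdef
  set Inside : Set (Sym2 V) := G.edgeSet ∩ {e | e ∈ c.edges} with hIdef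
  set Out : Set (Sym2 V) := G.edgeSet \ {e | e ∈ c.edges} with hOdef
  have hsplit : G.edgeSet = Inside ∪ Out := (Set.inter_union_diff _ _).symm
  have h1 : G.edgeSet.ncard ≤ Inside.ncard + Out.ncard := by
    rw [hsplit]
    exact Set.ncard_union_le _ _
  have hInside : Inside.ncard ≤ c.length := by
    have hsub : Inside ⊆ ↑c.edges.toFinset := by
      intro e he
      simp only [Finset.coe_sort_coe, List.coe_toFinset, Set.mem_setOf_eq]
      exact he.2
    calc Inside.ncard ≤ (↑c.edges.toFinset : Set (Sym2 V)).ncard :=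
          Set.ncard_le_ncard hsub (Set.toFinite _)
      _ = c.edges.toFinset.card := Set.ncard_coe_finset _
      _ ≤ c.edges.length := c.edges.toFinset_card_le
      _ = c.length := c.length_edges
  -- each Out edge has at most one endpoint on the cycle
  have hout1 : ∀ {a b : V}, G.Adj a b → s(a, b) ∉ c.edges →
      ¬(a ∈ c.support ∧ b ∈ c.support) := by
    rintro a b hadj hne ⟨ha, hb⟩
    exact no_chord hG hc ha hb hadj hne
  -- the contraction map is injective on Out and lands in G'.edgeSet
  have hmapmem : ∀ e ∈ Out, Sym2.map f e ∈ G'.edgeSet := by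
    intro e he
    induction e with
    | h a b =>
      obtain ⟨hadj, hne⟩ := he
      rw [Sym2.map_pair_eq]
      have hnot := hout1 hadj hne
      by_cases haS : a ∈ c.support
      · have hbS : b ∉ c.support := fun h => hnot ⟨haS, h⟩
        have : f a = v₀ := if_pos haS
        rw [this]
        have : f b = b := if_neg hbS
        rw [this]
        exact (contract_adj_hub hv₀ hbS).mpr ⟨a, haS, hadj⟩
      · have : f a = a := if_neg haS
        rw [this]
        by_cases hbS : b ∈ c.support
        · have : f b = v₀ := if_pos hbS
          rw [this]
          rw [Sym2.eq_swap]
          exact (contract_adj_hub hv₀ haS).mpr ⟨b, hbS, hadj.symm⟩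
        · have : f b = b := if_neg hbS
          rw [this]
          exact (contract_adj_out hv₀ haS hbS).mpr hadj
  have hinj : Set.InjOn (Sym2.map f) Out := by
    rintro e₁ he₁ e₂ he₂ heq
    induction e₁ with
    | h a b =>
      induction e₂ with
      | h a' b' =>
        obtain ⟨hadj, hne⟩ := he₁
        obtain ⟨hadj', hne'⟩ := he₂
        rw [Sym2.map_pair_eq, Sym2.map_pair_eq, Sym2.eq_iff] at heq
        rcases heq with ⟨h1, h2⟩ | ⟨h1, h2⟩
        · exact contract_pair_eq hG hc hadj hadj' (hout1 hadj hne) (hout1 hadj' hne') h1 h2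
        · have := contract_pair_eq hG hc hadj hadj'.symm (hout1 hadj hne)
            (fun ⟨x, y⟩ => hout1 hadj' hne' ⟨y, x⟩) h1 h2
          rw [this, Sym2.eq_swap]
  have hOut : Out.ncard ≤ G'.edgeSet.ncard := by
    rw [← Set.ncard_image_of_injOn hinj]
    exact Set.ncard_le_ncard (Set.image_subset_iff.mpr hmapmem) (Set.toFinite _)
  omega

lemma cycle_support_ncard {v₀ : V} {c : G.Walk v₀ v₀} (hc : c.IsCycle) :
    {z | z ∈ c.support}.ncard = c.length := by
  have hnil : c ≠ Walk.nil := hc.ne_nil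
  have hset : {z | z ∈ c.support} = {z | z ∈ c.support.tail} := by
    ext z
    simp only [Set.mem_setOf_eq]
    constructor
    · intro hz
      rcases (Walk.mem_support_iff _).mp hz with rfl | h
      · exact end_mem_tail_support c hnil
      · exact h
    · intro hz
      exact (Walk.mem_support_iff _).mpr (Or.inr hz)
  rw [hset]
  have : {z | z ∈ c.support.tail} = ↑c.support.tail.toFinset := by
    ext z; simp
  rw [this, Set.ncard_coe_finset, List.toFinset_card_of_nodup hc.2]
  have := c.length_support
  simp only [List.length_tail, this]
  omega

lemma cycle_support_subset_graph_support {v₀ : V} {c : G.Walk v₀ v₀} (hc : c.IsCycle) :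
    {z | z ∈ c.support} ⊆ G.support := by
  intro z hz
  have h3 := hc.three_le_length
  obtain ⟨y, hy⟩ := exists_incident_edge c (by omega) hz
  exact ⟨y, c.adj_of_mem_edges hy⟩

lemma contract_support_subset {v₀ : V} {c : G.Walk v₀ v₀} :
    (contract G c.support v₀).support ⊆ (G.support \ {z | z ∈ c.support}) ∪ {v₀} := by
  classical
  have hv₀ : v₀ ∈ c.support := c.start_mem_support
  rintro u ⟨w, hadj⟩
  by_cases hu : u = v₀
  · exact Or.inr hu
  · left
    obtain ⟨hne, a, b, hab, ha, hb⟩ := hadj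
    constructor
    · by_cases haS : a ∈ c.support
      · rw [if_pos haS] at ha
        exact absurd ha.symm hu
      · rw [if_neg haS] at ha
        exact ⟨b, ha ▸ hab⟩
    · intro huS
      exact contract_isolated hv₀ huS hu w ⟨hne, a, b, hab, ha, hb⟩

lemma NEC_of_le {H : SimpleGraph V} (hle : H ≤ G) (hG : NEC G) : NEC H := by
  intro v w hw
  have hedges : ∀ e ∈ w.edges, e ∈ G.edgeSet := fun e he =>
    SimpleGraph.edgeSet_mono hle (w.edges_subset_edgeSet he)
  have := hG _ (isCycle_transfer hedges hw)
  rwa [Walk.length_transfer] at this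

end Contract


lemma UB [Fintype V] (k : ℕ) :
    ∀ (G : SimpleGraph V) (s : Set V), G.support ⊆ s → s.ncard ≤ k → NEC G →
    2 * G.edgeSet.ncard ≤ 3 * (s.ncard - 1) := by
  induction k with
  | zero =>
    intro G s hsupp hsk hG
    by_cases hE : G.edgeSet = ∅
    · rw [hE]; simp
    · obtain ⟨e₀, he₀⟩ := Set.nonempty_iff_ne_empty.mpr hE
      exfalso
      induction e₀ with
      | h a₀ b₀ =>
        have hab₀ : G.Adj a₀ b₀ := he₀
        have : a₀ ∈ s := hsupp ⟨b₀, hab₀⟩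
        have h0 : s.ncard = 0 := by omega
        rw [Set.ncard_eq_zero (Set.toFinite _)] at h0
        rw [h0] at this
        exact this
  | succ k IH =>
    intro G s hsupp hsk hG
    by_cases hE : G.edgeSet = ∅
    · rw [hE]; simp
    · obtain ⟨e₀, he₀⟩ := Set.nonempty_iff_ne_empty.mpr hE
      obtain ⟨a₀, b₀, hab₀⟩ : ∃ a b, G.Adj a b := by
        induction e₀ with
        | h a₀ b₀ => exact ⟨a₀, b₀, he₀⟩
      have ha₀s : a₀ ∈ s := hsupp ⟨b₀, hab₀⟩
      have hb₀s : b₀ ∈ s := hsupp ⟨a₀, hab₀.symm⟩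
      have hs2 : 2 ≤ s.ncard := by
        have hsub : ({a₀, b₀} : Set V) ⊆ s := by
          rintro x (rfl | rfl)
          · exact ha₀s
          · exact hb₀s
        calc 2 = ({a₀, b₀} : Set V).ncard := (Set.ncard_pair hab₀.ne).symm
          _ ≤ s.ncard := Set.ncard_le_ncard hsub (Set.toFinite _)
      have hepos : 1 ≤ G.edgeSet.ncard := by
        rw [Nat.one_le_iff_ne_zero]
        intro h0
        rw [Set.ncard_eq_zero (Set.toFinite _)] at h0
        exact hE h0
      by_cases hdeg : ∃ v w₀, G.neighborSet v = {w₀}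
      · -- a vertex of degree one: delete its edge
        obtain ⟨v, w₀, hvw⟩ := hdeg
        have hadjvw : G.Adj v w₀ := by
          have : w₀ ∈ G.neighborSet v := by rw [hvw]; rfl
          exact this
        set H := G.deleteEdges {s(v, w₀)} with hHdef
        have hHnec : NEC H := NEC_of_le (G.deleteEdges_le _) hG
        have hHsupp : H.support ⊆ s \ {v} := by
          rintro u ⟨z, hz⟩
          change H.Adj u z at hz
          rw [SimpleGraph.deleteEdges_adj] at hz
          refine ⟨hsupp ⟨z, hz.1⟩, ?_⟩
          rintro rfl
          have : z ∈ G.neighborSet u := hz.1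
          rw [hvw] at this
          rw [Set.mem_singleton_iff] at this
          subst this
          exact hz.2 rfl
        have hvs : v ∈ s := hsupp ⟨w₀, hadjvw⟩
        have hcard : (s \ {v}).ncard = s.ncard - 1 :=
          Set.ncard_diff_singleton_of_mem hvs
        have hecard : H.edgeSet.ncard = G.edgeSet.ncard - 1 := by
          rw [hHdef, SimpleGraph.edgeSet_deleteEdges]
          exact Set.ncard_diff_singleton_of_mem hadjvw
        have hIH := IH H (s \ {v}) hHsupp (by omega) hHnec
        omega
      · -- minimum degree at least two
        have htwo : ∀ v w, G.Adj v w → ∃ w', G.Adj v w' ∧ w' ≠ w := by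
          intro v w hvw
          by_contra hno
          push_neg at hno
          refine absurd ?_ (fun hcon => hdeg ⟨v, w, hcon⟩)
          ext x
          simp only [SimpleGraph.mem_neighborSet, Set.mem_singleton_iff]
          exact ⟨fun hx => hno x hx, fun hx => hx ▸ hvw⟩
        -- take a longest path
        set P : Set ℕ := {n | ∃ (x y : V) (p : G.Walk x y), p.IsPath ∧ p.length = n}
          with hPdef
        have hPne : P.Nonempty := ⟨0, a₀, a₀, Walk.nil, by simp, rfl⟩
        have hPbdd : BddAbove P := by
          refine ⟨Fintype.card V, ?_⟩
          rintro n ⟨x, y, p, hp, rfl⟩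
          exact le_of_lt hp.length_lt
        obtain ⟨a, b, p, hp, hplen⟩ := Nat.sSup_mem hPne hPbdd
        have hmax : ∀ (x y : V) (q : G.Walk x y), q.IsPath → q.length ≤ sSup P :=
          fun x y q hq => le_csSup hPbdd ⟨x, y, q, hq, rfl⟩
        have hp1 : 1 ≤ p.length := by
          have h1 : (Walk.cons hab₀ Walk.nil).IsPath := by
            rw [Walk.cons_isPath_iff]
            simp [hab₀.ne]
          have := hmax _ _ _ h1
          simp only [Walk.length_cons, Walk.length_nil] at this
          omega
        have hab : a ≠ b := by
          rintro rfl
          rw [isPath_loop_eq_nil hp] at hp1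
          simp at hp1
        obtain ⟨w₁, h₁, t, rfl⟩ := Walk.exists_eq_cons_of_ne hab p
        obtain ⟨z, hz, hzw⟩ := htwo a w₁ h₁
        have hzsupp : z ∈ (Walk.cons h₁ t).support := by
          by_contra hzs
          have hcp : (Walk.cons hz.symm (Walk.cons h₁ t)).IsPath := by
            rw [Walk.cons_isPath_iff]
            exact ⟨hp, hzs⟩
          have := hmax _ _ _ hcp
          rw [Walk.length_cons, hplen] at this
          omega
        set q := (Walk.cons h₁ t).takeUntil z hzsupp with hqdef
        have hqpath : q.IsPath := hp.takeUntil hzsupp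
        have hqe : s(z, a) ∉ q.edges := by
          intro hmem
          have hmem' : s(a, z) ∈ (Walk.cons h₁ t).edges :=
            (Walk.edges_takeUntil_subset _ hzsupp) (Sym2.eq_swap ▸ hmem)
          rw [Walk.edges_cons, List.mem_cons] at hmem'
          rcases hmem' with heq | hmem''
          · rw [Sym2.eq_iff] at heq
            rcases heq with ⟨-, h⟩ | ⟨h1', h2'⟩
            · exact hzw h
            · exact hz.ne' h2'
          · exact ((Walk.cons_isPath_iff _ _).mp hp).2
              (t.fst_mem_support_of_mem_edges hmem'')
        set cyc : G.Walk z z := Walk.cons hz.symm q with hcycdef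
        have hcyc : cyc.IsCycle := (Walk.cons_isCycle_iff q hz.symm).mpr ⟨hqpath, hqe⟩
        set L := cyc.length with hLdef
        have hL3 : 3 ≤ L := hcyc.three_le_length
        set Cset := {x | x ∈ cyc.support} with hCdef
        have hCsub : Cset ⊆ s := (cycle_support_subset_graph_support hcyc).trans hsupp
        have hCL : Cset.ncard = L := cycle_support_ncard hcyc
        set G' := contract G cyc.support z with hG'def
        have hG'nec : NEC G' := contract_NEC hG hcyc
        set s' : Set V := (s \ Cset) ∪ {z} with hs'def
        have hG'supp : G'.support ⊆ s' := by
          intro u hu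
          rcases contract_support_subset hu with ⟨hus, huC⟩ | h
          · exact Or.inl ⟨hsupp hus, huC⟩
          · exact Or.inr h
        have hs'1 : s'.ncard ≤ s.ncard - L + 1 := by
          calc s'.ncard ≤ (s \ Cset).ncard + ({z} : Set V).ncard :=
                Set.ncard_union_le _ _
            _ = s.ncard - L + 1 := by
                rw [Set.ncard_diff hCsub (Set.toFinite _), hCL, Set.ncard_singleton]
        have hLs : L ≤ s.ncard := by
          rw [← hCL]
          exact Set.ncard_le_ncard hCsub (Set.toFinite _)
        have hIH := IH G' s' hG'supp (by omega) hG'nec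
        have hEB := contract_edge_bound hG hcyc
        rw [← hLdef, ← hG'def] at hEB
        omega


/-- the friendship-type extremal graph: hub 0, matching edges (2t+1, 2t+2) -/
def FG (n : ℕ) : SimpleGraph (Fin n) where
  Adj i j := i ≠ j ∧ (i.val = 0 ∨ j.val = 0 ∨
    (i.val % 2 = 1 ∧ j.val = i.val + 1) ∨ (j.val % 2 = 1 ∧ i.val = j.val + 1))
  symm := by
    constructor
    rintro i j ⟨hij, h⟩
    exact ⟨hij.symm, by tauto⟩
  loopless := ⟨fun i h => h.1 rfl⟩

lemma FG_unique {n : ℕ} {x y z : Fin n} (hx : x.val ≠ 0) (hy : y.val ≠ 0)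
    (hz : z.val ≠ 0) (h1 : (FG n).Adj x y) (h2 : (FG n).Adj x z) : y = z := by
  obtain ⟨hxy, c1⟩ := h1
  obtain ⟨hxz, c2⟩ := h2
  rcases c1 with h | h | ⟨ho1, he1⟩ | ⟨ho1, he1⟩ <;>
    rcases c2 with g | g | ⟨go1, ge1⟩ | ⟨go1, ge1⟩ <;>
    exact Fin.ext (by omega)

lemma FG_NEC (n : ℕ) : NEC (FG n) := by
  classical
  have huniq0 : ∀ {u x : Fin n}, u.val = 0 → x.val = 0 → x = u := by
    intro u x hu hx
    exact Fin.ext (hx.trans hu.symm)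
  intro v w hw
  by_cases h0 : ∃ u ∈ w.support, u.val = 0
  · obtain ⟨u, hu, hu0⟩ := h0
    have hwr : (w.rotate u hu).IsCycle := hw.rotate hu
    have hlenr : (w.rotate u hu).length = w.length := length_rotate w hu
    suffices h : ¬ Even (w.rotate u hu).length by rwa [hlenr] at h
    generalize (w.rotate u hu) = w' at hwr
    clear hlenr hu hw w v
    cases w' with
    | nil => exact absurd (Walk.isCycle_def _ |>.mp hwr).2.1 (not_not.mpr rfl)
    | cons h₁ q =>
      rename_i x₁
      obtain ⟨hqpath, hqedge⟩ := (Walk.cons_isCycle_iff q h₁).mp hwr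
      have h3 : 3 ≤ q.length + 1 := by
        have := hwr.three_le_length
        simpa using this
      intro hEv
      rw [Walk.length_cons] at hEv
      have hq3 : 3 ≤ q.length := by
        rw [Nat.even_iff] at hEv
        omega
      have hx₁u : x₁ ≠ u := h₁.ne'
      obtain ⟨x₂, h₂, q₂, rfl⟩ := Walk.exists_eq_cons_of_ne hx₁u q
      have hq₂path : q₂.IsPath := hqpath.of_cons
      have hx₂u : x₂ ≠ u := by
        rintro rfl
        rw [isPath_loop_eq_nil hq₂path] at hq3
        simp at hq3
      obtain ⟨x₃, h₃, q₃, rfl⟩ := Walk.exists_eq_cons_of_ne hx₂u q₂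
      have hq₃path : q₃.IsPath := hq₂path.of_cons
      have hx₃u : x₃ ≠ u := by
        rintro rfl
        rw [isPath_loop_eq_nil hq₃path] at hq3
        simp at hq3
      have hv1 : x₁.val ≠ 0 := fun h => hx₁u (huniq0 hu0 h)
      have hv2 : x₂.val ≠ 0 := fun h => hx₂u (huniq0 hu0 h)
      have hv3 : x₃.val ≠ 0 := fun h => hx₃u (huniq0 hu0 h)
      have heq : x₁ = x₃ := FG_unique hv2 hv1 hv3 h₂.symm h₃
      rw [Walk.cons_isPath_iff] at hqpath
      refine hqpath.2 ?_
      rw [heq, Walk.support_cons]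
      exact List.mem_cons_of_mem _ q₃.start_mem_support
  · push_neg at h0
    exfalso
    cases w with
    | nil => exact absurd (Walk.isCycle_def _ |>.mp hw).2.1 (not_not.mpr rfl)
    | cons h₁ q =>
      rename_i x₁
      obtain ⟨hqpath, hqedge⟩ := (Walk.cons_isCycle_iff q h₁).mp hw
      have h3 : 3 ≤ q.length + 1 := by
        have := hw.three_le_length
        simpa using this
      have hx₁v : x₁ ≠ v := h₁.ne'
      obtain ⟨x₂, h₂, q₂, rfl⟩ := Walk.exists_eq_cons_of_ne hx₁v q
      have hq₂path : q₂.IsPath := hqpath.of_cons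
      have hv0 : v.val ≠ 0 := h0 v (Walk.start_mem_support _)
      have hx₁0 : x₁.val ≠ 0 := h0 x₁ (by simp)
      have hx₂0 : x₂.val ≠ 0 := h0 x₂ (by simp)
      have heq : v = x₂ := FG_unique hx₁0 hv0 hx₂0 h₁.symm h₂
      subst heq
      rw [isPath_loop_eq_nil hq₂path] at h3
      simp at h3

lemma FG_card {n : ℕ} (hn : 0 < n) : (FG n).edgeSet.ncard = 3 * (n - 1) / 2 := by
  classical
  set hub : Finset (Sym2 (Fin n)) :=
    (Finset.univ.filter (fun j : Fin n => j.val ≠ 0)).image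
      (fun j => s((⟨0, hn⟩ : Fin n), j)) with hhub
  set mat : Finset (Sym2 (Fin n)) :=
    (Finset.range ((n - 1) / 2)).attach.image
      (fun t => s((⟨2 * t.1 + 1, by have := Finset.mem_range.mp t.2; omega⟩ : Fin n),
                  (⟨2 * t.1 + 2, by have := Finset.mem_range.mp t.2; omega⟩ : Fin n)))
      with hmat
  have hset : (FG n).edgeSet = ↑(hub ∪ mat) := by
    ext e
    induction e with
    | h i j =>
      simp only [SimpleGraph.mem_edgeSet, Finset.coe_union, Set.mem_union,
        Finset.mem_coe]
      constructor
      · rintro ⟨hij, hcase⟩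
        have hijv : i.val ≠ j.val := fun h => hij (Fin.ext h)
        rcases hcase with h | h | ⟨hodd, hsucc⟩ | ⟨hodd, hsucc⟩
        · left
          rw [hhub, Finset.mem_image]
          refine ⟨j, ?_, ?_⟩
          · rw [Finset.mem_filter]
            exact ⟨Finset.mem_univ _, by omega⟩
          · exact Sym2.eq_iff.mpr (Or.inl ⟨Fin.ext (by simpa using h.symm), rfl⟩)
        · left
          rw [hhub, Finset.mem_image]
          refine ⟨i, ?_, ?_⟩
          · rw [Finset.mem_filter]
            exact ⟨Finset.mem_univ _, by omega⟩
          · exact Sym2.eq_iff.mpr (Or.inr ⟨Fin.ext (by simpa using h.symm), rfl⟩)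
        · right
          rw [hmat, Finset.mem_image]
          have hjlt : j.val < n := j.isLt
          have htmem : i.val / 2 ∈ Finset.range ((n - 1) / 2) := by
            rw [Finset.mem_range]
            omega
          refine ⟨⟨i.val / 2, htmem⟩, Finset.mem_attach _ _, ?_⟩
          exact Sym2.eq_iff.mpr (Or.inl ⟨Fin.ext (by simp; omega),
            Fin.ext (by simp; omega)⟩)
        · right
          rw [hmat, Finset.mem_image]
          have hilt : i.val < n := i.isLt
          have htmem : j.val / 2 ∈ Finset.range ((n - 1) / 2) := by
            rw [Finset.mem_range]
            omega
          refine ⟨⟨j.val / 2, htmem⟩, Finset.mem_attach _ _, ?_⟩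
          exact Sym2.eq_iff.mpr (Or.inr ⟨Fin.ext (by simp; omega),
            Fin.ext (by simp; omega)⟩)
      · intro h
        rcases h with h | h
        · rw [hhub, Finset.mem_image] at h
          obtain ⟨x, hx, hxe⟩ := h
          rw [Finset.mem_filter] at hx
          have hx0 : x.val ≠ 0 := hx.2
          rcases Sym2.eq_iff.mp hxe with ⟨h1, h2⟩ | ⟨h1, h2⟩
          · have hi0 : i.val = 0 := by rw [← h1]
            have hj0 : j.val ≠ 0 := by rw [← h2]; exact hx0
            exact ⟨fun hc => hj0 (by rw [← hc]; exact hi0), Or.inl hi0⟩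
          · have hj0 : j.val = 0 := by rw [← h1]
            have hi0 : i.val ≠ 0 := by rw [← h2]; exact hx0
            exact ⟨fun hc => hi0 (by rw [hc]; exact hj0), Or.inr (Or.inl hj0)⟩
        · rw [hmat, Finset.mem_image] at h
          obtain ⟨t, -, hte⟩ := h
          rcases Sym2.eq_iff.mp hte with ⟨h1, h2⟩ | ⟨h1, h2⟩
          · have hi : i.val = 2 * t.1 + 1 := by rw [← h1]
            have hj : j.val = 2 * t.1 + 2 := by rw [← h2]
            exact ⟨fun hc => by rw [hc] at hi; omega,
              Or.inr (Or.inr (Or.inl (by omega)))⟩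
          · have hj : j.val = 2 * t.1 + 1 := by rw [← h1]
            have hi : i.val = 2 * t.1 + 2 := by rw [← h2]
            exact ⟨fun hc => by rw [hc] at hi; omega,
              Or.inr (Or.inr (Or.inr (by omega)))⟩
  rw [hset, Set.ncard_coe_finset]
  have hdisj : Disjoint hub mat := by
    rw [Finset.disjoint_left]
    intro e he hm
    rw [hhub, Finset.mem_image] at he
    rw [hmat, Finset.mem_image] at hm
    obtain ⟨x, hx, rfl⟩ := he
    obtain ⟨t, -, hte⟩ := hm
    rcases Sym2.eq_iff.mp hte with ⟨h1, -⟩ | ⟨-, h2⟩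
    · have := congrArg Fin.val h1
      simp at this
    · have := congrArg Fin.val h2
      simp at this
  rw [Finset.card_union_of_disjoint hdisj]
  have hhubcard : hub.card = n - 1 := by
    rw [hhub, Finset.card_image_of_injOn]
    · have hfe : (Finset.univ.filter (fun j : Fin n => j.val ≠ 0))
          = Finset.univ.erase ⟨0, hn⟩ := by
        ext x
        simp [Fin.ext_iff]
      rw [hfe, Finset.card_erase_of_mem (Finset.mem_univ _), Finset.card_univ,
        Fintype.card_fin]
    · intro x hx y hy hxy
      rcases Sym2.eq_iff.mp hxy with ⟨-, h⟩ | ⟨h1, h2⟩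
      · exact h
      · simp only [Finset.coe_filter, Set.mem_setOf_eq] at hx
        have := congrArg Fin.val h2
        simp at this
        exact absurd this hx.2
  have hmatcard : mat.card = (n - 1) / 2 := by
    rw [hmat, Finset.card_image_of_injOn, Finset.card_attach, Finset.card_range]
    intro t ht u hu htu
    rcases Sym2.eq_iff.mp htu with ⟨h1, -⟩ | ⟨h1, -⟩
    · have := congrArg Fin.val h1
      simp at this
      exact Subtype.ext (by have h1' := congrArg Fin.val h1; simp only [Fin.val_mk] at h1'; omega)
    · have := congrArg Fin.val h1
      simp at this
      omega
  rw [hhubcard, hmatcard]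
  omega

end NECaux

/-- The maximum number of edges in a graph on `n` vertices with no even cycle is
`⌊3(n-1)/2⌋`. -/
theorem max_edges_no_even_cycle (n : ℕ) :
    IsGreatest {m | ∃ G : SimpleGraph (Fin n),
      (∀ (v : Fin n) (w : G.Walk v v), w.IsCycle → ¬ Even w.length) ∧
      G.edgeSet.ncard = m} (3 * (n - 1) / 2) := by
  constructor
  · -- membership: the friendship-type graph is extremal
    rcases Nat.eq_zero_or_pos n with rfl | hn
    · refine ⟨⊥, fun v => v.elim0, ?_⟩
      rw [SimpleGraph.edgeSet_bot]
      simp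
    · exact ⟨NECaux.FG n, fun v w hw => NECaux.FG_NEC n w hw, NECaux.FG_card hn⟩
  · -- upper bound
    rintro m ⟨G, hnec, rfl⟩
    classical
    have hcard : (Set.univ : Set (Fin n)).ncard = n := by
      rw [Set.ncard_univ, Nat.card_eq_fintype_card, Fintype.card_fin]
    have h2 := NECaux.UB n G Set.univ (Set.subset_univ _) (le_of_eq hcard)
      (fun v w hw => hnec v w hw)
    rw [hcard] at h2
    omega
end

section
/- Every family of ⌊3(n−1)/2⌋ + 1 even cycles in K_n has a rainbow even cycle. -/
set_option linter.unusedSectionVars false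
set_option linter.unnecessarySimpa false
set_option maxHeartbeats 1000000
open SimpleGraph Walk
variable {V : Type*} [DecidableEq V] {G : SimpleGraph V}

/-- No even cycle in `G`. -/
def NoEvenCycle (G : SimpleGraph V) : Prop :=
  ∀ ⦃v : V⦄ (w : G.Walk v v), w.IsCycle → ¬ Even w.length

lemma getVert_inj {u v : V} (p : G.Walk u v) (hp : p.IsPath) :
    ∀ {i k : ℕ}, i ≤ p.length → k ≤ p.length → p.getVert i = p.getVert k → i = k := by
  induction p with
  | nil => intro i k hi hk _; simp at hi hk; omega
  | cons h q ih =>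
    intro i k hi hk hik
    match i, k with
    | 0, 0 => rfl
    | 0, k+1 =>
      exfalso
      rw [Walk.getVert_zero, Walk.getVert_cons_succ] at hik
      have : q.getVert k ∈ q.support :=
        Walk.mem_support_iff_exists_getVert.mpr ⟨k, rfl, by simpa using hk⟩
      rw [← hik] at this
      exact ((Walk.cons_isPath_iff _ _).mp hp).2 this
    | i+1, 0 =>
      exfalso
      rw [Walk.getVert_zero, Walk.getVert_cons_succ] at hik
      have : q.getVert i ∈ q.support :=
        Walk.mem_support_iff_exists_getVert.mpr ⟨i, rfl, by simpa using hi⟩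
      rw [hik] at this
      exact ((Walk.cons_isPath_iff _ _).mp hp).2 this
    | i+1, k+1 =>
      have := ih ((Walk.cons_isPath_iff _ _).mp hp).1 (i := i) (k := k)
        (by simpa using hi) (by simpa using hk) (by simpa [Walk.getVert_cons_succ] using hik)
      omega

lemma mem_edges_getVert {u v : V} (p : G.Walk u v) {e : Sym2 V} (he : e ∈ p.edges) :
    ∃ i < p.length, e = s(p.getVert i, p.getVert (i+1)) := by
  induction p with
  | nil => simp at he
  | cons h q ih =>
    rw [Walk.edges_cons, List.mem_cons] at he
    rcases he with rfl | he
    · exact ⟨0, by simp, by simp [Walk.getVert_cons_succ]⟩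
    · obtain ⟨i, hi, rfl⟩ := ih he
      exact ⟨i+1, by simp [hi], by simp [Walk.getVert_cons_succ]⟩

lemma length_take_add_drop' {u v x : V} (p : G.Walk u v) (h : x ∈ p.support) :
    (p.takeUntil x h).length + (p.dropUntil x h).length = p.length := by
  have := congrArg Walk.length (p.take_spec h)
  rwa [Walk.length_append] at this

lemma getVert_takeUntil {u v x : V} (p : G.Walk u v) (h : x ∈ p.support) {i : ℕ}
    (hi : i ≤ (p.takeUntil x h).length) :
    (p.takeUntil x h).getVert i = p.getVert i := by
  conv_rhs => rw [← p.take_spec h]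
  rw [Walk.getVert_append]
  rcases lt_or_eq_of_le hi with hi' | rfl
  · rw [if_pos hi']
  · rw [if_neg (lt_irrefl _), Nat.sub_self, Walk.getVert_zero, Walk.getVert_length]

lemma getVert_pos_eq {u v x : V} (p : G.Walk u v) (h : x ∈ p.support) :
    p.getVert (p.takeUntil x h).length = x := by
  rw [← getVert_takeUntil p h (le_refl _), Walk.getVert_length]

lemma getVert_dropUntil {u v x : V} (p : G.Walk u v) (h : x ∈ p.support) (i : ℕ) :
    (p.dropUntil x h).getVert i = p.getVert ((p.takeUntil x h).length + i) := by
  have key := congrArg (fun w : G.Walk u v => w.getVert ((p.takeUntil x h).length + i))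
    (p.take_spec h)
  simp only [Walk.getVert_append] at key
  rw [if_neg (by omega), Nat.add_sub_cancel_left] at key
  exact key

lemma mem_support_takeUntil_iff {u v x z : V} (p : G.Walk u v) (h : x ∈ p.support) :
    z ∈ (p.takeUntil x h).support ↔ ∃ i ≤ (p.takeUntil x h).length, p.getVert i = z := by
  rw [Walk.mem_support_iff_exists_getVert]
  constructor
  · rintro ⟨i, rfl, hi⟩; exact ⟨i, hi, (getVert_takeUntil p h hi).symm⟩
  · rintro ⟨i, hi, rfl⟩; exact ⟨i, getVert_takeUntil p h hi, hi⟩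

lemma mem_support_dropUntil_iff {u v x z : V} (p : G.Walk u v) (h : x ∈ p.support) :
    z ∈ (p.dropUntil x h).support ↔
      ∃ i, (p.takeUntil x h).length ≤ i ∧ i ≤ p.length ∧ p.getVert i = z := by
  rw [Walk.mem_support_iff_exists_getVert]
  have hl := length_take_add_drop' p h
  constructor
  · rintro ⟨i, rfl, hi⟩
    exact ⟨(p.takeUntil x h).length + i, by omega, by omega, (getVert_dropUntil p h i).symm⟩
  · rintro ⟨i, hi1, hi2, rfl⟩
    refine ⟨i - (p.takeUntil x h).length, ?_, by omega⟩
    rw [getVert_dropUntil]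
    congr 1
    omega

/-- Splitting a cycle at a vertex `b` distinct from its base gives two paths. -/
lemma cycle_arcs {a b : V} {c : G.Walk a a} (hc : c.IsCycle) (hb : b ∈ c.support)
    (hba : b ≠ a) : (c.takeUntil b hb).IsPath ∧ (c.dropUntil b hb).IsPath := by
  set T := c.takeUntil b hb with hT
  set D := c.dropUntil b hb with hD
  have hTD : T.append D = c := c.take_spec hb
  have htail : c.support.tail = T.support.tail ++ D.support.tail := by
    have h1 : c.support = T.support ++ D.support.tail := by
      rw [← hTD, Walk.support_append]
    have h2 : T.support = a :: T.support.tail := T.support_eq_cons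
    rw [h2, List.cons_append] at h1
    rw [c.support_eq_cons] at h1
    exact (List.cons.injEq _ _ _ _ ▸ h1).2
  have hnd : (T.support.tail ++ D.support.tail).Nodup := htail ▸ hc.2
  have hndT : T.support.tail.Nodup := (List.nodup_append.mp hnd).1
  have hndD : D.support.tail.Nodup := (List.nodup_append.mp hnd).2.1
  have hdisj : List.Disjoint T.support.tail D.support.tail := (List.nodup_append'.mp hnd).2.2
  have hTtrail : T.IsTrail := hc.isTrail.takeUntil hb
  have hDtrail : D.IsTrail := hc.isTrail.dropUntil hb
  have hamem : a ∈ D.support.tail := by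
    have : a ∈ D.support := Walk.end_mem_support D
    rw [D.support_eq_cons] at this
    rcases List.mem_cons.mp this with h | h
    · exact absurd h.symm hba
    · assumption
  have hbmem : b ∈ T.support.tail := by
    have : b ∈ T.support := Walk.end_mem_support T
    rw [T.support_eq_cons] at this
    rcases List.mem_cons.mp this with h | h
    · exact absurd h hba
    · assumption
  constructor
  · refine ⟨hTtrail, ?_⟩
    rw [T.support_eq_cons]
    exact List.nodup_cons.mpr ⟨fun ha => hdisj ha hamem, hndT⟩
  · refine ⟨hDtrail, ?_⟩
    rw [D.support_eq_cons]
    exact List.nodup_cons.mpr ⟨fun hb' => hdisj hbmem hb', hndD⟩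

/-- Two internally-disjoint, edge-disjoint paths between distinct vertices form a cycle. -/
lemma cycle_of_two_paths {a b : V} {p q : G.Walk a b} (hp : p.IsPath) (hq : q.IsPath)
    (hab : a ≠ b) (hdisj : ∀ x ∈ p.support, x ∈ q.support → x = a ∨ x = b)
    (hedge : ∀ e ∈ p.edges, e ∉ q.edges) : (p.append q.reverse).IsCycle := by
  rw [Walk.isCycle_def]
  refine ⟨?_, ?_, ?_⟩
  · constructor
    rw [Walk.edges_append, Walk.edges_reverse]
    refine List.Nodup.append hp.edges_nodup (List.nodup_reverse.mpr hq.edges_nodup) ?_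
    intro e he he'
    exact hedge e he (List.mem_reverse.mp he')
  · cases p with
    | nil => exact absurd rfl hab
    | cons h r => simp [Walk.cons_append]
  · rw [Walk.support_append, p.support_eq_cons, List.cons_append, List.tail_cons]
    refine List.Nodup.append ?_ ?_ ?_
    · exact (List.nodup_cons.mp (p.support_eq_cons ▸ hp.support_nodup)).2
    · exact (List.nodup_cons.mp ((q.reverse).support_eq_cons ▸ hq.reverse.support_nodup)).2
    · intro x hx hx'
      have hxp : x ∈ p.support := p.support_eq_cons ▸ List.mem_cons_of_mem _ hx
      have hxq : x ∈ q.support := by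
        have : x ∈ q.reverse.support := (q.reverse).support_eq_cons ▸ List.mem_cons_of_mem _ hx'
        rwa [Walk.support_reverse, List.mem_reverse] at this
      rcases hdisj x hxp hxq with rfl | rfl
      · exact (List.nodup_cons.mp (p.support_eq_cons ▸ hp.support_nodup)).1 hx
      · exact (List.nodup_cons.mp ((q.reverse).support_eq_cons ▸ hq.reverse.support_nodup)).1 hx'

lemma end_mem_support_tail {u : V} (c : G.Walk u u) (h : ¬ c.Nil) : u ∈ c.support.tail := by
  cases c with
  | nil => simp at h
  | cons h q => simpa using Walk.end_mem_support q

lemma support_rotate_subset {u v : V} (c : G.Walk v v) (h : u ∈ c.support) :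
    (c.rotate u h).support ⊆ c.support := by
  intro x hx
  rw [(c.rotate u h).support_eq_cons] at hx
  rcases List.mem_cons.mp hx with rfl | hx'
  · exact h
  · exact (List.tail_sublist c.support).subset ((Walk.support_rotate c u h).mem_iff.mp hx')

/-- The theta lemma. -/
lemma theta {a b v : V} {c : G.Walk v v} (hc : c.IsCycle) (h : NoEvenCycle G)
    (ha : a ∈ c.support) (hb : b ∈ c.support) (hab : a ≠ b)
    {p : G.Walk a b} (hp : p.IsPath)
    (hint : ∀ x ∈ p.support, x ∈ c.support → x = a ∨ x = b)
    (hedge : ∀ e ∈ p.edges, e ∉ c.edges) : False := by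
  set c' := c.rotate a ha with hc'def
  have hc' : c'.IsCycle := hc.rotate ha
  have hb' : b ∈ c'.support := by
    rw [c'.support_eq_cons]
    refine List.mem_cons_of_mem _ ?_
    rw [(Walk.support_rotate c a ha).mem_iff]
    rcases List.mem_cons.mp (c.support_eq_cons ▸ hb) with rfl | hbt
    · exact end_mem_support_tail c hc.not_nil
    · exact hbt
  set q1 := c'.takeUntil b hb' with hq1def
  set q2 := c'.dropUntil b hb' with hq2def
  obtain ⟨hq1, hq2⟩ := cycle_arcs hc' hb' hab.symm
  have hsup1 : q1.support ⊆ c.support :=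
    fun x hx => support_rotate_subset c ha (c'.support_takeUntil_subset hb' hx)
  have hsup2 : q2.support ⊆ c.support :=
    fun x hx => support_rotate_subset c ha (c'.support_dropUntil_subset hb' hx)
  have hedc : c'.edges ⊆ c.edges := fun e he => (Walk.rotate_edges c a ha).mem_iff.mp he
  have hed1 : q1.edges ⊆ c.edges := fun e he => hedc (c'.edges_takeUntil_subset hb' he)
  have hed2 : q2.edges ⊆ c.edges := fun e he => hedc (c'.edges_dropUntil_subset hb' he)
  have hD1 : (p.append q1.reverse).IsCycle :=
    cycle_of_two_paths hp hq1 hab (fun x hx hx' => hint x hx (hsup1 hx'))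
      (fun e he he' => hedge e he (hed1 he'))
  have hD2 : (p.append q2.reverse.reverse).IsCycle := by
    refine cycle_of_two_paths hp hq2.reverse hab (fun x hx hx' => hint x hx (hsup2 ?_))
      (fun e he he' => hedge e he (hed2 ?_))
    · rwa [Walk.support_reverse, List.mem_reverse] at hx'
    · rwa [Walk.edges_reverse, List.mem_reverse] at he'
  have h0 := h c hc
  have h1 := h _ hD1
  have h2 := h _ hD2
  have hlen : q1.length + q2.length = c.length := by
    rw [length_take_add_drop' c' hb', hc'def, Walk.rotate]
    rw [Walk.length_append, Nat.add_comm, length_take_add_drop' c ha]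
  rw [Walk.length_append, Walk.length_reverse] at h1
  rw [Walk.length_append, Walk.length_reverse, Walk.length_reverse] at h2
  rw [Nat.even_iff] at h0 h1 h2
  omega

def suppF {V : Type*} [Fintype V] [DecidableEq V] (R : Finset (Sym2 V)) : Finset V :=
  Finset.univ.filter (fun v => ∃ e ∈ R, v ∈ e)

lemma mem_suppF {V : Type*} [Fintype V] [DecidableEq V] {R : Finset (Sym2 V)} {v : V} :
    v ∈ suppF R ↔ ∃ e ∈ R, v ∈ e := by
  simp [suppF]

lemma nec_anti {G G' : SimpleGraph V} (hle : G ≤ G') (h : NoEvenCycle G') : NoEvenCycle G :=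
  fun _ w hw he => h (w.mapLe hle) (Walk.IsCycle.mapLe hle hw) (by simpa using he)

lemma suppF_two {V : Type*} [Fintype V] [DecidableEq V] {R : Finset (Sym2 V)}
    (hdiag : ∀ e ∈ R, ¬ e.IsDiag) (hne : R.Nonempty) : 2 ≤ (suppF R).card := by
  obtain ⟨e, he⟩ := hne
  induction e using Sym2.ind with
  | _ x y =>
    have hxy : x ≠ y := fun h => hdiag _ he (by simp [h])
    have hsub : ({x, y} : Finset V) ⊆ suppF R := by
      intro z hz
      rcases Finset.mem_insert.mp hz with rfl | hz
      · exact mem_suppF.mpr ⟨_, he, by simp⟩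
      · rw [Finset.mem_singleton] at hz; subst hz
        exact mem_suppF.mpr ⟨_, he, by simp⟩
    calc 2 = ({x, y} : Finset V).card := (Finset.card_pair hxy).symm
    _ ≤ _ := Finset.card_le_card hsub

lemma extremal {V : Type*} [Fintype V] [DecidableEq V] :
    ∀ (N : ℕ) (R : Finset (Sym2 V)), R.card ≤ N → (∀ e ∈ R, ¬ e.IsDiag) →
    NoEvenCycle (SimpleGraph.fromEdgeSet (R : Set (Sym2 V))) →
    2 * R.card ≤ 3 * ((suppF R).card - 1) := by
  intro N
  induction N with
  | zero =>
    intro R hc _ _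
    have : R = ∅ := Finset.card_eq_zero.mp (Nat.le_zero.mp hc)
    simp [this]
  | succ N IH =>
    intro R hcard hdiag hnec
    classical
    rcases R.eq_empty_or_nonempty with rfl | hne
    · simp
    set G := SimpleGraph.fromEdgeSet (R : Set (Sym2 V)) with hGdef
    have hAdj : ∀ x y : V, G.Adj x y ↔ s(x, y) ∈ R := by
      intro x y
      rw [hGdef, SimpleGraph.fromEdgeSet_adj]
      constructor
      · rintro ⟨h1, _⟩; exact_mod_cast h1
      · intro h1
        exact ⟨by exact_mod_cast h1, fun hxy => hdiag _ h1 (by simp [hxy])⟩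
    by_cases hdeg : ∃ v, ∃ e ∈ R, v ∈ e ∧ ∀ e' ∈ R, v ∈ e' → e' = e
    · -- a vertex of degree one: delete its edge
      obtain ⟨v, e, heR, hve, huniq⟩ := hdeg
      set R' := R.erase e with hR'
      have hsub : R' ⊆ R := Finset.erase_subset _ _
      have hcard' : R'.card ≤ N := by
        rw [hR', Finset.card_erase_of_mem heR]
        omega
      have hnec' : NoEvenCycle (SimpleGraph.fromEdgeSet (R' : Set (Sym2 V))) :=
        nec_anti (SimpleGraph.fromEdgeSet_mono (by exact_mod_cast hsub)) hnec
      have hIH := IH R' hcard' (fun e' he' => hdiag e' (hsub he')) hnec'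
      have hvsupp : v ∈ suppF R := mem_suppF.mpr ⟨e, heR, hve⟩
      have hsupp' : suppF R' ⊆ (suppF R).erase v := by
        intro x hx
        obtain ⟨e', he', hxe'⟩ := mem_suppF.mp hx
        refine Finset.mem_erase.mpr ⟨?_, mem_suppF.mpr ⟨e', hsub he', hxe'⟩⟩
        rintro rfl
        have hee := huniq e' (hsub he') hxe'
        rw [hee] at he'
        exact (Finset.notMem_erase e R) he'
      have h2 : 2 ≤ (suppF R).card := suppF_two hdiag hne
      have hle := Finset.card_le_card hsupp'
      rw [Finset.card_erase_of_mem hvsupp] at hle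
      have hcc : R'.card = R.card - 1 := by rw [hR', Finset.card_erase_of_mem heR]
      have hRpos : 1 ≤ R.card := Finset.card_pos.mpr hne
      rw [hcc] at hIH
      omega
    · -- minimum degree at least two
      push_neg at hdeg
      have hdeg2 : ∀ v : V, (∃ e ∈ R, v ∈ e) → ∃ a b : V, a ≠ b ∧ G.Adj v a ∧ G.Adj v b := by
        rintro v ⟨e, he, hve⟩
        obtain ⟨e', he', hve', hne'⟩ := hdeg v e he hve
        refine ⟨Sym2.Mem.other hve, Sym2.Mem.other hve', ?_, ?_, ?_⟩
        · intro hco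
          exact hne' (by rw [← Sym2.other_spec hve', ← hco, Sym2.other_spec hve])
        · exact (hAdj _ _).mpr (by rw [Sym2.other_spec hve]; exact he)
        · exact (hAdj _ _).mpr (by rw [Sym2.other_spec hve']; exact he')
      obtain ⟨e0, he0⟩ := hne
      have he0m : e0.out.1 ∈ e0 := Sym2.out_fst_mem e0
      have hadj0 : G.Adj e0.out.1 (Sym2.Mem.other he0m) :=
        (hAdj _ _).mpr (by rw [Sym2.other_spec he0m]; exact he0)
      have hVpos : 0 < Fintype.card V := Fintype.card_pos_iff.mpr ⟨e0.out.1⟩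
      set Q : ℕ → Prop := fun l => ∃ (u w : V) (p : G.Walk u w), p.IsPath ∧ p.length = l
        with hQdef
      have hQ1 : Q 1 := ⟨_, _, Walk.cons hadj0 Walk.nil,
        (Walk.cons_isPath_iff _ _).mpr ⟨Walk.IsPath.nil, by simpa using hadj0.ne⟩, by simp⟩
      have h1V : 1 ≤ Fintype.card V := hVpos
      have hQL : Q (Nat.findGreatest Q (Fintype.card V)) :=
        Nat.findGreatest_spec h1V hQ1
      obtain ⟨v0, vt, P, hP, hPlen⟩ := hQL
      have hmax : ∀ (u w : V) (q : G.Walk u w), q.IsPath → q.length ≤ P.length := by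
        intro u w q hq
        rw [hPlen]
        exact Nat.le_findGreatest (le_of_lt hq.length_lt) ⟨u, w, q, hq, rfl⟩
      have hL1 : 1 ≤ P.length := by
        rw [hPlen]
        exact Nat.le_findGreatest h1V hQ1
      have hnbr0 : ∀ x, G.Adj v0 x → x ∈ P.support := by
        intro x hx
        by_contra hxs
        have hcons : (Walk.cons hx.symm P).IsPath := (Walk.cons_isPath_iff _ _).mpr ⟨hP, hxs⟩
        have := hmax _ _ _ hcons
        rw [Walk.length_cons] at this
        omega
      set posf : V → ℕ := fun x => if hx : x ∈ P.support then (P.takeUntil x hx).length else 0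
        with hposf
      have hposf_spec : ∀ (x : V) (hx : x ∈ P.support),
          P.getVert (posf x) = x ∧ posf x ≤ P.length := by
        intro x hx
        simp only [hposf, dif_pos hx]
        exact ⟨getVert_pos_eq P hx, P.length_takeUntil_le hx⟩
      have hinj : ∀ {i k : ℕ}, i ≤ P.length → k ≤ P.length →
          P.getVert i = P.getVert k → i = k := fun hi hk h => getVert_inj P hP hi hk h
      have hadj01 : G.Adj v0 (P.getVert 1) := by
        have := P.adj_getVert_succ (i := 0) (by omega)
        rwa [Walk.getVert_zero] at this
      set v1 := P.getVert 1 with hv1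
      have hv01 : v0 ≠ v1 := hadj01.ne
      have hv1sup : v1 ∈ P.support := Walk.mem_support_iff_exists_getVert.mpr ⟨1, rfl, hL1⟩
      have hposf1 : posf v1 = 1 :=
        hinj (hposf_spec _ hv1sup).2 hL1 (by rw [(hposf_spec _ hv1sup).1])
      obtain ⟨a, b, hab, hv0a', hv0b'⟩ := hdeg2 v0 ⟨s(v0, v1), (hAdj _ _).mp hadj01, by simp⟩
      set N0 : Finset V := Finset.univ.filter (G.Adj v0) with hN0
      have hN0ne : N0.Nonempty := ⟨a, by simp [hN0, hv0a']⟩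
      obtain ⟨vj, hvjN0, hvjmax⟩ := Finset.exists_max_image N0 posf hN0ne
      have hadj0j : G.Adj v0 vj := by simpa [hN0] using hvjN0
      have hvjsup : vj ∈ P.support := hnbr0 _ hadj0j
      set hj := posf vj with hhj
      have hgj : P.getVert hj = vj := (hposf_spec _ hvjsup).1
      have hjle : hj ≤ P.length := (hposf_spec _ hvjsup).2
      have hv1j : vj ≠ v1 := by
        rintro rfl
        have key : ∀ z, G.Adj v0 z → z = v1 := by
          intro z hz
          have hzs := hnbr0 z hz
          have hzle : posf z ≤ 1 := by
            have := hvjmax z (by simp [hN0, hz])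
            omega
          rcases Nat.le_one_iff_eq_zero_or_eq_one.mp hzle with h0 | h1
          · exfalso
            apply hz.ne'
            rw [← (hposf_spec _ hzs).1, h0, Walk.getVert_zero]
          · rw [← (hposf_spec _ hzs).1, h1]
        exact hab ((key a hv0a').trans (key b hv0b').symm)
      have hj2 : 2 ≤ hj := by
        have h0 : hj ≠ 0 := fun h => hadj0j.ne (by rw [← hgj, h, Walk.getVert_zero])
        have h1 : hj ≠ 1 := fun h => hv1j (by rw [← hgj, h])
        omega
      have hL2 : 2 ≤ P.length := le_trans hj2 hjle
      set v2 := P.getVert 2 with hv2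
      have hadj12 : G.Adj v1 v2 := P.adj_getVert_succ (by omega)
      set T0 := P.takeUntil vj hvjsup with hT0
      have hT0path : T0.IsPath := hP.takeUntil hvjsup
      have hT0len : T0.length = hj := by
        rw [hhj, hposf]
        simp only [dif_pos hvjsup, hT0]
      have hT0get : ∀ i, i ≤ hj → T0.getVert i = P.getVert i := fun i hi =>
        getVert_takeUntil P hvjsup (by rw [← hT0, hT0len]; exact hi)
      have hv0j : v0 ≠ vj := hadj0j.ne
      set E1 : G.Walk v0 vj := Walk.cons hadj0j Walk.nil with hE1
      have hE1path : E1.IsPath :=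
        (Walk.cons_isPath_iff _ _).mpr ⟨Walk.IsPath.nil, by simp [hadj0j.ne]⟩
      have hT0edge : ∀ e ∈ T0.edges, ∃ k, k + 1 ≤ hj ∧
          e = s(P.getVert k, P.getVert (k+1)) := by
        intro e he
        obtain ⟨k, hk, rfl⟩ := mem_edges_getVert T0 he
        rw [hT0len] at hk
        exact ⟨k, hk, by rw [hT0get k (by omega), hT0get (k+1) (by omega)]⟩
      have hENC : ∀ e ∈ T0.edges, e ∉ E1.edges := by
        intro e he heE
        obtain ⟨k, hk, rfl⟩ := hT0edge e he
        have heE' : s(P.getVert k, P.getVert (k+1)) = s(v0, vj) := by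
          simpa [hE1] using heE
        rcases Sym2.eq_iff.mp heE' with ⟨h1, h2⟩ | ⟨h1, h2⟩
        · have hk0 : k = 0 := hinj (by omega) (by omega)
            (by rw [h1, Walk.getVert_zero])
          have hk1 : k + 1 = hj := hinj (by omega) hjle (by rw [h2, hgj])
          omega
        · have hk1 : k + 1 = 0 := hinj (by omega) (by omega)
            (by rw [h2, Walk.getVert_zero])
          omega
      set C := T0.append E1.reverse with hC
      have hCcyc : C.IsCycle := by
        refine cycle_of_two_paths hT0path hE1path hv0j ?_ hENC
        intro x hx hx'
        have : x = v0 ∨ x = vj ∨ x ∈ ([] : List V) := by simpa [hE1] using hx'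
        tauto
      have hCsup : ∀ x, x ∈ C.support ↔ ∃ i, i ≤ hj ∧ P.getVert i = x := by
        intro x
        rw [hC, Walk.mem_support_append_iff]
        constructor
        · rintro (hx | hx)
          · obtain ⟨i, hi, hx⟩ := (mem_support_takeUntil_iff P hvjsup).mp hx
            exact ⟨i, by rw [← hT0len]; exact hi, hx⟩
          · have : x = vj ∨ x = v0 := by
              have := Walk.support_reverse E1 ▸ hx
              simpa [hE1] using hx
            rcases this with rfl | rfl
            · exact ⟨hj, le_refl _, hgj⟩
            · exact ⟨0, by omega, Walk.getVert_zero P⟩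
        · rintro ⟨i, hi, rfl⟩
          exact Or.inl ((mem_support_takeUntil_iff P hvjsup).mpr ⟨i, by rw [hT0len]; exact hi, rfl⟩)
      have hCedges : ∀ e, e ∈ C.edges → e ∈ T0.edges ∨ e = s(v0, vj) := by
        intro e he
        rw [hC, Walk.edges_append] at he
        rcases List.mem_append.mp he with h | h
        · exact Or.inl h
        · right
          have : e ∈ E1.edges.reverse := by rwa [← Walk.edges_reverse]
          rw [List.mem_reverse] at this
          simpa [hE1] using this
      have hCsub : ∀ x ∈ C.support, x ∈ P.support := by
        intro x hx
        obtain ⟨i, hi, rfl⟩ := (hCsup x).mp hx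
        exact Walk.mem_support_iff_exists_getVert.mpr ⟨i, rfl, by omega⟩
      have hv0C : v0 ∈ C.support := (hCsup v0).mpr ⟨0, by omega, Walk.getVert_zero P⟩
      have hv1C : v1 ∈ C.support := (hCsup v1).mpr ⟨1, by omega, rfl⟩
      have hvjC : vj ∈ C.support := (hCsup vj).mpr ⟨hj, le_refl _, hgj⟩
      -- the segment construction
      have segment : ∀ (w : V) (hw : w ∈ P.support), ¬ (∃ i, i ≤ hj ∧ P.getVert i = w) →
          ∃ (W : G.Walk vj w), W.IsPath ∧ (∀ x ∈ W.support, x ∈ P.support) ∧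
            (∀ x ∈ W.support, x ∈ C.support → x = vj) ∧ (∀ e ∈ W.edges, e ∉ C.edges) ∧
            v1 ∉ W.support := by
        intro w hw hnotC
        set Pu := P.takeUntil w hw with hPu
        have hPupath : Pu.IsPath := hP.takeUntil hw
        have hPuget : ∀ i, i ≤ Pu.length → Pu.getVert i = P.getVert i := fun i hi =>
          getVert_takeUntil P hw hi
        have hPulen : Pu.length ≤ P.length := P.length_takeUntil_le hw
        have hPuend : P.getVert Pu.length = w := getVert_pos_eq P hw
        have hjlt : hj < Pu.length := by
          by_contra hle
          push_neg at hle
          exact hnotC ⟨Pu.length, hle, hPuend⟩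
        have hvjPu : vj ∈ Pu.support :=
          (mem_support_takeUntil_iff P hw).mpr ⟨hj, le_of_lt hjlt, hgj⟩
        set W := Pu.dropUntil vj hvjPu with hW
        have hWpath : W.IsPath := hPupath.dropUntil hvjPu
        have hj' : (Pu.takeUntil vj hvjPu).length = hj := by
          have h1 : Pu.getVert (Pu.takeUntil vj hvjPu).length = vj := getVert_pos_eq Pu hvjPu
          have h2 : (Pu.takeUntil vj hvjPu).length ≤ Pu.length := Pu.length_takeUntil_le hvjPu
          rw [hPuget _ h2] at h1
          exact hinj (le_trans h2 hPulen) hjle (by rw [h1, hgj])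
        have hWsup : ∀ x ∈ W.support, ∃ i, hj ≤ i ∧ i ≤ Pu.length ∧ P.getVert i = x := by
          intro x hx
          obtain ⟨i, hi1, hi2, hx⟩ := (mem_support_dropUntil_iff Pu hvjPu).mp hx
          rw [hj'] at hi1
          exact ⟨i, hi1, hi2, by rw [← hPuget _ hi2, hx]⟩
        have hWsupP : ∀ x ∈ W.support, x ∈ P.support := by
          intro x hx
          obtain ⟨i, _, hi2, rfl⟩ := hWsup x hx
          exact Walk.mem_support_iff_exists_getVert.mpr ⟨i, rfl, le_trans hi2 hPulen⟩
        have hWC : ∀ x ∈ W.support, x ∈ C.support → x = vj := by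
          intro x hx hxC
          obtain ⟨i, hi1, hi2, rfl⟩ := hWsup x hx
          obtain ⟨i', hi', hx'⟩ := (hCsup _).mp hxC
          have hii : i' = i := hinj (le_trans hi' hjle) (le_trans hi2 hPulen) hx'
          rw [← hgj]
          congr 1
          omega
        have hWedgeC : ∀ e ∈ W.edges, e ∉ C.edges := by
          intro e heW heC
          induction e using Sym2.ind with
          | _ α β =>
            have hαW : α ∈ W.support := W.fst_mem_support_of_mem_edges heW
            have hβW : β ∈ W.support := W.snd_mem_support_of_mem_edges heW
            have hαC : α ∈ C.support := C.fst_mem_support_of_mem_edges heC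
            have hβC : β ∈ C.support := C.snd_mem_support_of_mem_edges heC
            have hα := hWC α hαW hαC
            have hβ := hWC β hβW hβC
            exact (W.adj_of_mem_edges heW).ne (hα.trans hβ.symm)
        have hv1W : v1 ∉ W.support := by
          intro hmem
          obtain ⟨i, hi1, hi2, hx⟩ := hWsup v1 hmem
          have : i = 1 := hinj (le_trans hi2 hPulen) hL1 hx
          omega
        exact ⟨W, hWpath, hWsupP, hWC, hWedgeC, hv1W⟩
      -- Fact A : all neighbours of v0 are v1 or vj
      have factA : ∀ x, G.Adj v0 x → x = v1 ∨ x = vj := by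
        intro x hx
        by_contra hcon
        push_neg at hcon
        obtain ⟨hx1, hxj⟩ := hcon
        have hxs := hnbr0 x hx
        have hxle : posf x ≤ hj := hvjmax x (by simp [hN0, hx])
        have hgx : P.getVert (posf x) = x := (hposf_spec _ hxs).1
        have hxC : x ∈ C.support := (hCsup x).mpr ⟨posf x, hxle, hgx⟩
        refine theta (p := Walk.cons hx Walk.nil) hCcyc hnec hv0C hxC hx.ne
          ((Walk.cons_isPath_iff _ _).mpr ⟨Walk.IsPath.nil, by simp [hx.ne]⟩) ?_ ?_
        · intro y hy _
          have : y = v0 ∨ y = x ∨ y ∈ ([] : List V) := by simpa using hy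
          tauto
        · intro e he heC
          have he' : e = s(v0, x) := by simpa using he
          subst he'
          rcases hCedges _ heC with hT | hE
          · obtain ⟨k, hk, hkk⟩ := hT0edge _ hT
            rcases Sym2.eq_iff.mp hkk.symm with ⟨h1, h2⟩ | ⟨h1, h2⟩
            · have hk0 : k = 0 := hinj (by omega) (by omega)
                (by rw [h1, Walk.getVert_zero])
              apply hx1
              rw [← h2, hk0]
            · have : k + 1 = 0 := hinj (by omega) (by omega)
                (by rw [h2, Walk.getVert_zero])
              omega
          · rcases Sym2.eq_iff.mp hE with ⟨h1, h2⟩ | ⟨h1, h2⟩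
            · exact hxj h2
            · exact hv0j h1
      -- Fact B : all neighbours of v1 are v0 or v2
      have hv1ne2 : v1 ≠ v2 := hadj12.ne
      have factB : ∀ u, G.Adj v1 u → u = v0 ∨ u = v2 := by
        intro u hu
        by_contra hcon
        push_neg at hcon
        obtain ⟨hu0, hu2⟩ := hcon
        by_cases huC : u ∈ C.support
        · refine theta (p := Walk.cons hu Walk.nil) hCcyc hnec hv1C huC hu.ne
            ((Walk.cons_isPath_iff _ _).mpr ⟨Walk.IsPath.nil, by simp [hu.ne]⟩) ?_ ?_
          · intro y hy _
            have : y = v1 ∨ y = u ∨ y ∈ ([] : List V) := by simpa using hy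
            tauto
          · intro e he heC
            have he' : e = s(v1, u) := by simpa using he
            subst he'
            rcases hCedges _ heC with hT | hE
            · obtain ⟨k, hk, hkk⟩ := hT0edge _ hT
              rcases Sym2.eq_iff.mp hkk.symm with ⟨h1, h2⟩ | ⟨h1, h2⟩
              · have hk1 : k = 1 := hinj (by omega) (by omega) (by rw [h1, hv1])
                apply hu2
                rw [← h2, hk1]
              · have hk1 : k + 1 = 1 := hinj (by omega) (by omega) (by rw [h2, hv1])
                apply hu0
                rw [← h1]
                have hk0 : k = 0 := by omega
                rw [hk0, Walk.getVert_zero]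
            · rcases Sym2.eq_iff.mp hE with ⟨h1, h2⟩ | ⟨h1, h2⟩
              · exact hv01 h1.symm
              · exact hv1j h1.symm
        · by_cases huP : u ∈ P.support
          · obtain ⟨W, hWpath, hWsupP, hWC, hWedgeC, hv1W⟩ := segment u huP
              (fun ⟨i, hi, hx⟩ => huC ((hCsup u).mpr ⟨i, hi, hx⟩))
            have hppath : (Walk.cons hu W.reverse).IsPath := by
              refine (Walk.cons_isPath_iff _ _).mpr ⟨hWpath.reverse, ?_⟩
              rw [Walk.support_reverse, List.mem_reverse]
              exact hv1W
            refine theta hCcyc hnec hv1C hvjC (Ne.symm hv1j) hppath ?_ ?_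
            · intro y hy hyC
              rw [Walk.support_cons, List.mem_cons] at hy
              rcases hy with rfl | hy
              · exact Or.inl rfl
              · rw [Walk.support_reverse, List.mem_reverse] at hy
                exact Or.inr (hWC y hy hyC)
            · intro e he heC
              rw [Walk.edges_cons, List.mem_cons] at he
              rcases he with rfl | he
              · exact huC (C.snd_mem_support_of_mem_edges heC)
              · rw [Walk.edges_reverse, List.mem_reverse] at he
                exact hWedgeC e he heC
          · have hPnil : ¬ P.Nil := by
              rw [Walk.nil_iff_length_eq]
              omega
            have hQpath : (Walk.cons hu.symm P.tail).IsPath := by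
              refine Walk.IsPath.mk' ?_
              rw [Walk.support_cons, support_tail_of_not_nil _ hPnil]
              refine List.nodup_cons.mpr ⟨fun hmem => huP ((List.tail_sublist _).subset hmem), ?_⟩
              exact (List.tail_sublist _).nodup hP.support_nodup
            have hQlen : (Walk.cons hu.symm P.tail).length = P.length := by
              rw [Walk.length_cons, Walk.length_tail_add_one hPnil]
            have hnbru : ∀ y, G.Adj u y → y = u ∨ y ∈ P.support.tail := by
              intro y hy
              by_contra hys
              push_neg at hys
              obtain ⟨hy1, hy2⟩ := hys
              have hymem : y ∉ (Walk.cons hu.symm P.tail).support := by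
                rw [Walk.support_cons, support_tail_of_not_nil _ hPnil]
                intro hc
                rcases List.mem_cons.mp hc with rfl | hc
                · exact hy1 rfl
                · exact hy2 hc
              have hcons : (Walk.cons hy.symm (Walk.cons hu.symm P.tail)).IsPath :=
                (Walk.cons_isPath_iff _ _).mpr ⟨hQpath, hymem⟩
              have := hmax _ _ _ hcons
              rw [Walk.length_cons, hQlen] at this
              omega
            obtain ⟨a', b', hab', hua', hub'⟩ := hdeg2 u ⟨s(v1, u), (hAdj _ _).mp hu, by simp⟩
            obtain ⟨w, huw, hwv1⟩ : ∃ w, G.Adj u w ∧ w ≠ v1 := by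
              rcases eq_or_ne a' v1 with rfl | hav
              · exact ⟨b', hub', Ne.symm hab'⟩
              · exact ⟨a', hua', hav⟩
            have hwu : w ≠ u := huw.ne'
            have hwP : w ∈ P.support.tail := by
              rcases hnbru w huw with rfl | h
              · exact absurd rfl hwu
              · exact h
            have hwPs : w ∈ P.support := (List.tail_sublist _).subset hwP
            have hwv0 : w ≠ v0 := by
              rintro rfl
              have hnd := hP.support_nodup
              rw [P.support_eq_cons] at hnd
              exact (List.nodup_cons.mp hnd).1 hwP
            have huC' : u ∉ C.support := fun h => huP (hCsub u h)
            by_cases hwC : w ∈ C.support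
            · have hpp : (Walk.cons hu (Walk.cons huw Walk.nil)).IsPath := by
                refine (Walk.cons_isPath_iff _ _).mpr ⟨?_, ?_⟩
                · exact (Walk.cons_isPath_iff _ _).mpr ⟨Walk.IsPath.nil, by simp [huw.ne]⟩
                · simp only [Walk.support_cons, Walk.support_nil, List.mem_cons,
                    List.mem_singleton]
                  push_neg
                  exact ⟨hu.ne, Ne.symm hwv1, by simp⟩
              refine theta hCcyc hnec hv1C hwC (Ne.symm hwv1) hpp ?_ ?_
              · intro y hy hyC
                simp only [Walk.support_cons, Walk.support_nil, List.mem_cons,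
                  List.mem_singleton] at hy
                rcases hy with rfl | rfl | rfl | h
                · exact Or.inl rfl
                · exact absurd hyC huC'
                · exact Or.inr rfl
                · exact absurd h List.not_mem_nil
              · intro e he heC
                simp only [Walk.edges_cons, Walk.edges_nil, List.mem_cons,
                  List.not_mem_nil, or_false] at he
                rcases he with rfl | rfl
                · exact huC' (C.snd_mem_support_of_mem_edges heC)
                · exact huC' (C.fst_mem_support_of_mem_edges heC)
            · obtain ⟨W, hWpath, hWsupP, hWC, hWedgeC, hv1W⟩ := segment w hwPs
                (fun ⟨i, hi, hx⟩ => hwC ((hCsup w).mpr ⟨i, hi, hx⟩))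
              have huW : u ∉ W.support := fun h => huP (hWsupP u h)
              have hinner : (Walk.cons huw W.reverse).IsPath := by
                refine (Walk.cons_isPath_iff _ _).mpr ⟨hWpath.reverse, ?_⟩
                rw [Walk.support_reverse, List.mem_reverse]
                exact huW
              have hpp : (Walk.cons hu (Walk.cons huw W.reverse)).IsPath := by
                refine (Walk.cons_isPath_iff _ _).mpr ⟨hinner, ?_⟩
                rw [Walk.support_cons, List.mem_cons]
                push_neg
                refine ⟨hu.ne, ?_⟩
                rw [Walk.support_reverse, List.mem_reverse]
                exact hv1W
              refine theta hCcyc hnec hv1C hvjC (Ne.symm hv1j) hpp ?_ ?_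
              · intro y hy hyC
                simp only [Walk.support_cons, List.mem_cons] at hy
                rcases hy with rfl | rfl | hy
                · exact Or.inl rfl
                · exact absurd hyC huC'
                · rw [Walk.support_reverse, List.mem_reverse] at hy
                  exact Or.inr (hWC y hy hyC)
              · intro e he heC
                simp only [Walk.edges_cons, List.mem_cons] at he
                rcases he with rfl | rfl | he
                · exact huC' (C.snd_mem_support_of_mem_edges heC)
                · exact huC' (C.fst_mem_support_of_mem_edges heC)
                · rw [Walk.edges_reverse, List.mem_reverse] at he
                  exact hWedgeC e he heC
      -- now delete the three edges at v0 and v1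
      have hv02 : v0 ≠ v2 := by
        intro h
        have : (0 : ℕ) = 2 := hinj (by omega) (by omega) (by rw [Walk.getVert_zero, ← hv2, ← h])
        omega
      have hEv0 : ∀ e ∈ R, v0 ∈ e → e = s(v0, v1) ∨ e = s(v0, vj) := by
        intro e he hv
        have hsp : s(v0, Sym2.Mem.other hv) = e := Sym2.other_spec hv
        have hadj' : G.Adj v0 (Sym2.Mem.other hv) := (hAdj _ _).mpr (by rw [hsp]; exact he)
        rcases factA _ hadj' with h | h
        · left; rw [← hsp, h]
        · right; rw [← hsp, h]
      have hEv1 : ∀ e ∈ R, v1 ∈ e → e = s(v1, v0) ∨ e = s(v1, v2) := by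
        intro e he hv
        have hsp : s(v1, Sym2.Mem.other hv) = e := Sym2.other_spec hv
        have hadj' : G.Adj v1 (Sym2.Mem.other hv) := (hAdj _ _).mpr (by rw [hsp]; exact he)
        rcases factB _ hadj' with h | h
        · left; rw [← hsp, h]
        · right; rw [← hsp, h]
      set e1 := s(v0, v1) with he1def
      set e2 := s(v0, vj) with he2def
      set e3 := s(v1, v2) with he3def
      have he1R : e1 ∈ R := (hAdj _ _).mp hadj01
      have he2R : e2 ∈ R := (hAdj _ _).mp hadj0j
      have he3R : e3 ∈ R := (hAdj _ _).mp hadj12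
      have h12 : e1 ≠ e2 := by
        intro h
        rcases Sym2.eq_iff.mp h with ⟨_, h2⟩ | ⟨h1, _⟩
        · exact hv1j h2.symm
        · exact hv0j h1
      have h13 : e1 ≠ e3 := by
        intro h
        rcases Sym2.eq_iff.mp h with ⟨h1, _⟩ | ⟨h1, _⟩
        · exact hv01 h1
        · exact hv02 h1
      have h23 : e2 ≠ e3 := by
        intro h
        rcases Sym2.eq_iff.mp h with ⟨h1, _⟩ | ⟨h1, _⟩
        · exact hv01 h1
        · exact hv02 h1
      set S3 : Finset (Sym2 V) := {e1, e2, e3} with hS3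
      have hS3sub : S3 ⊆ R := by
        intro e he
        rcases Finset.mem_insert.mp he with rfl | he
        · exact he1R
        rcases Finset.mem_insert.mp he with rfl | he
        · exact he2R
        rw [Finset.mem_singleton] at he
        subst he
        exact he3R
      have hS3card : S3.card = 3 := by
        rw [hS3, Finset.card_insert_of_notMem (by simp [h12, h13]),
          Finset.card_insert_of_notMem (by simp [h23]), Finset.card_singleton]
      set R' := R \ S3 with hR'
      have hR'sub : R' ⊆ R := Finset.sdiff_subset
      have hR'card : R'.card = R.card - 3 := by
        rw [hR', Finset.card_sdiff_of_subset hS3sub, hS3card]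
      have hR3 : 3 ≤ R.card := hS3card ▸ Finset.card_le_card hS3sub
      have hnec' : NoEvenCycle (SimpleGraph.fromEdgeSet (R' : Set (Sym2 V))) :=
        nec_anti (SimpleGraph.fromEdgeSet_mono (by exact_mod_cast hR'sub)) hnec
      have hIH := IH R' (by omega) (fun e he => hdiag e (hR'sub he)) hnec'
      have hsupp' : suppF R' ⊆ (suppF R) \ {v0, v1} := by
        intro x hx
        obtain ⟨e, he, hxe⟩ := mem_suppF.mp hx
        have heR := hR'sub he
        have heS : e ∉ S3 := (Finset.mem_sdiff.mp he).2
        refine Finset.mem_sdiff.mpr ⟨mem_suppF.mpr ⟨e, heR, hxe⟩, ?_⟩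
        simp only [Finset.mem_insert, Finset.mem_singleton]
        rintro (rfl | rfl)
        · rcases hEv0 e heR hxe with rfl | rfl
          · exact heS (by simp [hS3])
          · exact heS (by simp [hS3])
        · rcases hEv1 e heR hxe with h | h
          · exact heS (by rw [h]; simp [hS3, he1def, Sym2.eq_swap])
          · exact heS (by rw [h]; simp [hS3])
      have hv0s : v0 ∈ suppF R := mem_suppF.mpr ⟨e1, he1R, by simp [he1def]⟩
      have hv1s : v1 ∈ suppF R := mem_suppF.mpr ⟨e1, he1R, by simp [he1def]⟩
      have hvjs : vj ∈ suppF R := mem_suppF.mpr ⟨e2, he2R, by simp [he2def]⟩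
      have hsupp3 : 3 ≤ (suppF R).card := by
        have hsub : ({v0, v1, vj} : Finset V) ⊆ suppF R := by
          intro x hx
          rcases Finset.mem_insert.mp hx with rfl | hx
          · exact hv0s
          rcases Finset.mem_insert.mp hx with rfl | hx
          · exact hv1s
          rw [Finset.mem_singleton] at hx
          subst hx
          exact hvjs
        have hcard3 : ({v0, v1, vj} : Finset V).card = 3 := by
          rw [Finset.card_insert_of_notMem (by simp [hv01, hv0j]),
            Finset.card_insert_of_notMem (by simp [Ne.symm hv1j]), Finset.card_singleton]
        calc (3 : ℕ) = _ := hcard3.symm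
        _ ≤ _ := Finset.card_le_card hsub
      have hpair : ({v0, v1} : Finset V) ⊆ suppF R := by
        intro x hx
        rcases Finset.mem_insert.mp hx with rfl | hx
        · exact hv0s
        rw [Finset.mem_singleton] at hx
        subst hx
        exact hv1s
      have hcard2 : (suppF R').card ≤ (suppF R).card - 2 := by
        have h1 := Finset.card_le_card hsupp'
        rw [Finset.card_sdiff_of_subset hpair, Finset.card_pair hv01] at h1
        exact h1
      omega

lemma nec_empty {V : Type*} [DecidableEq V] :
    NoEvenCycle (SimpleGraph.fromEdgeSet ((∅ : Finset (Sym2 V)) : Set (Sym2 V))) := by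
  intro v w hw _
  cases w with
  | nil => exact hw.ne_nil rfl
  | cons h p =>
    rw [SimpleGraph.fromEdgeSet_adj] at h
    simpa using h.1

lemma not_nec_of_cycle_subset {V : Type*} [DecidableEq V] {R C : Finset (Sym2 V)}
    (hC : IsCycleEdgeSet C) (hE : Even C.card) (hsub : C ⊆ R) :
    ¬ NoEvenCycle (SimpleGraph.fromEdgeSet (R : Set (Sym2 V))) := by
  obtain ⟨v, w, hw, hedges⟩ := hC
  intro hnec
  have hmem : ∀ e ∈ w.edges, e ∈ (SimpleGraph.fromEdgeSet (R : Set (Sym2 V))).edgeSet := by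
    intro e he
    rw [SimpleGraph.edgeSet_fromEdgeSet, Set.mem_diff]
    constructor
    · have h1 : e ∈ C := hedges ▸ List.mem_toFinset.mpr he
      exact_mod_cast hsub h1
    · have h2 := w.edges_subset_edgeSet he
      rw [SimpleGraph.edgeSet_top] at h2
      exact h2
  have hcyc := hw.transfer hmem
  apply hnec _ hcyc
  rw [Walk.length_transfer]
  have hlen : C.card = w.length := by
    rw [← hedges, List.toFinset_card_of_nodup hw.isTrail.edges_nodup, Walk.length_edges]
  rwa [← hlen]

lemma cycle_up {V : Type*} [DecidableEq V] {R : Finset (Sym2 V)}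
    (h : ¬ NoEvenCycle (SimpleGraph.fromEdgeSet (R : Set (Sym2 V)))) :
    ∃ C : Finset (Sym2 V), IsCycleEdgeSet C ∧ Even C.card ∧ (C : Set (Sym2 V)) ⊆ R := by
  rw [NoEvenCycle] at h
  push_neg at h
  obtain ⟨v, w, hw, heven⟩ := h
  refine ⟨w.edges.toFinset, ⟨v, w.mapLe le_top, Walk.IsCycle.mapLe le_top hw, ?_⟩, ?_, ?_⟩
  · ext e
    simp only [List.mem_toFinset, Walk.edges_map, List.mem_map]
    constructor
    · rintro ⟨e', he', rfl⟩
      simpa [SimpleGraph.Hom.ofLE_apply, Sym2.map_id'] using he'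
    · intro he
      exact ⟨e, he, by simp [SimpleGraph.Hom.ofLE_apply, Sym2.map_id']⟩
  · rw [List.toFinset_card_of_nodup hw.isTrail.edges_nodup, Walk.length_edges]
    exact heven
  · intro e he
    rw [Finset.mem_coe, List.mem_toFinset] at he
    have h2 := w.edges_subset_edgeSet he
    rw [SimpleGraph.edgeSet_fromEdgeSet, Set.mem_diff] at h2
    exact h2.1

/-- Every family of `⌊3(n-1)/2⌋ + 1` even cycles in `K_n` has a rainbow even cycle. -/
theorem rainbow_even_cycle (n : ℕ)
    (O : Fin (3 * (n - 1) / 2 + 1) → Finset (Sym2 (Fin n)))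
    (hO : ∀ i, IsCycleEdgeSet (O i) ∧ Even (O i).card) :
    ∃ R : Finset (Sym2 (Fin n)), IsRainbow O R ∧ IsCycleEdgeSet R ∧ Even R.card := by
  classical
  set S : Set (Finset (Sym2 (Fin n))) := {R | IsRainbow O R ∧
    NoEvenCycle (SimpleGraph.fromEdgeSet (R : Set (Sym2 (Fin n))))} with hS
  have hSne : (∅ : Finset (Sym2 (Fin n))) ∈ S := by
    refine ⟨⟨fun _ => (0 : Fin (3 * (n - 1) / 2 + 1)), ?_, ?_⟩, nec_empty⟩
    · simp [Set.InjOn]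
    · simp
  obtain ⟨R, hRS, hRmax⟩ := Set.Finite.exists_maximalFor Finset.card S (Set.toFinite S)
    ⟨∅, hSne⟩
  obtain ⟨σ, hσinj, hσmem⟩ := hRS.1
  have hRnec := hRS.2
  have hdiagR : ∀ e ∈ R, ¬ e.IsDiag := by
    intro e he
    have h1 : e ∈ O (σ e) := hσmem e he
    obtain ⟨v, w, hw, hed⟩ := (hO (σ e)).1
    rw [← hed] at h1
    have h2 := w.edges_subset_edgeSet (List.mem_toFinset.mp h1)
    rw [SimpleGraph.edgeSet_top] at h2
    exact h2
  have hext := extremal R.card R le_rfl hdiagR hRnec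
  have hsuppn : (suppF R).card ≤ n := by
    calc (suppF R).card ≤ (Finset.univ : Finset (Fin n)).card := Finset.card_le_univ _
    _ = n := by simp
  have hRcard : R.card < 3 * (n - 1) / 2 + 1 := by
    have h3 : 3 * ((suppF R).card - 1) ≤ 3 * (n - 1) := by omega
    omega
  have himg : ∃ i : Fin (3 * (n - 1) / 2 + 1), i ∉ R.image σ := by
    by_contra hcon
    push_neg at hcon
    have huniv : (Finset.univ : Finset (Fin (3 * (n - 1) / 2 + 1))) ⊆ R.image σ :=
      fun i _ => hcon i
    have := Finset.card_le_card huniv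
    rw [Finset.card_univ, Fintype.card_fin] at this
    have := Finset.card_image_le (s := R) (f := σ)
    omega
  obtain ⟨i, hi⟩ := himg
  have hOnotsub : ∃ e ∈ O i, e ∉ R := by
    by_contra hcon
    push_neg at hcon
    exact not_nec_of_cycle_subset (hO i).1 (hO i).2 hcon hRnec
  obtain ⟨e, heO, heR⟩ := hOnotsub
  set σ' := Function.update σ e i with hσ'
  set R1 := insert e R with hR1
  have hupd : ∀ x ∈ R, σ' x = σ x := fun x hx =>
    Function.update_of_ne (fun h => heR (by rw [← h]; exact hx)) _ _
  have hσ'e : σ' e = i := Function.update_self _ _ _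
  have hinj1 : Set.InjOn σ' (R1 : Set (Sym2 (Fin n))) := by
    intro x hx y hy hxy
    rw [hR1, Finset.coe_insert, Set.mem_insert_iff, Finset.mem_coe] at hx hy
    rcases hx with rfl | hx <;> rcases hy with rfl | hy
    · rfl
    · exfalso
      rw [hσ'e, hupd y hy] at hxy
      exact hi (hxy ▸ Finset.mem_image_of_mem σ hy)
    · exfalso
      rw [hσ'e, hupd x hx] at hxy
      exact hi (hxy ▸ Finset.mem_image_of_mem σ hx)
    · rw [hupd x hx, hupd y hy] at hxy
      exact hσinj (Finset.mem_coe.mpr hx) (Finset.mem_coe.mpr hy) hxy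
  have hmem1 : ∀ x ∈ R1, x ∈ O (σ' x) := by
    intro x hx
    rcases Finset.mem_insert.mp hx with rfl | hx
    · rw [hσ'e]; exact heO
    · rw [hupd x hx]; exact hσmem x hx
  have hR1card : R1.card = R.card + 1 := Finset.card_insert_of_notMem heR
  have hR1nec : ¬ NoEvenCycle (SimpleGraph.fromEdgeSet (R1 : Set (Sym2 (Fin n)))) := by
    intro hnec1
    have hR1S : R1 ∈ S := ⟨⟨σ', hinj1, hmem1⟩, hnec1⟩
    have := hRmax (j := R1) hR1S (by omega)
    omega
  obtain ⟨Cc, hCcyc, hCev, hCsub⟩ := cycle_up hR1nec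
  refine ⟨Cc, ⟨σ', hinj1.mono hCsub, fun x hx => hmem1 x ?_⟩, hCcyc, hCev⟩
  have := hCsub (Finset.mem_coe.mpr hx)
  exact Finset.mem_coe.mp this
end
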